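/- arXiv:2407.10288 — 6 statements merged into one kernel-verified Lean document; each statement's English description precedes it below -/
import Mathlib

section
/- Let n ≥ 4 and 0 ≤ k ≤ n − 3, and let G be a graph attaining the maximum Wiener index among all connected graphs on n vertices with exactly k cut vertices. Then G is triangle-free. -/
open SimpleGraph

variable {V : Type*}

/-- The distance (transmission) of a vertex `v`: the sum of distances from `v`
to all other vertices. -/
noncomputable def vertexDistance [Fintype V] (G : SimpleGraph V) (v : V) : ℕ :=
  ∑ u : V, G.dist v u

/-- The Wiener index: the sum of distances over all unordered pairs of vertices. -/
noncomputable def wienerIndex [Fintype V] (G : SimpleGraph V) : ℕ :=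
  (∑ u : V, ∑ v : V, G.dist u v) / 2

/-- `v` is a cut vertex of `G` if deleting it leaves a disconnected
(or empty) graph. -/
def IsCutVertex (G : SimpleGraph V) (v : V) : Prop :=
  ¬ (G.induce ({v}ᶜ : Set V)).Connected

/-- The number of cut vertices of `G`. -/
noncomputable def cutVertexCount (G : SimpleGraph V) : ℕ :=
  {v : V | IsCutVertex G v}.ncard

/-- `B` is (the vertex set of) a block of `G`: a maximal connected subgraph on at
least two vertices that has no cut vertex of its own. -/
def IsBlock (G : SimpleGraph V) (B : Set V) : Prop :=
  2 ≤ B.ncard ∧ (G.induce B).Connected ∧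
    (∀ v : B, ¬ IsCutVertex (G.induce B) v) ∧
    ∀ C : Set V, B ⊆ C → (G.induce C).Connected →
      (∀ v : C, ¬ IsCutVertex (G.induce C) v) → C = B

/-- A pendant block: a block containing exactly one cut vertex of `G`. -/
def IsPendantBlock (G : SimpleGraph V) (B : Set V) : Prop :=
  IsBlock G B ∧ {v ∈ B | IsCutVertex G v}.ncard = 1

/-- An s-pendant block: a pendant block which shares its cut vertex with exactly
one non-pendant block of `G`. -/
def IsSPendantBlock (G : SimpleGraph V) (B : Set V) : Prop :=
  IsPendantBlock G B ∧
    ∀ w ∈ B, IsCutVertex G w →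
      {C : Set V | IsBlock G C ∧ ¬ IsPendantBlock G C ∧ w ∈ C}.ncard = 1

/-- The graph `L_{n,g}`: a cycle `C_g` on the vertices `0, …, g-1` (consecutive
edges together with the chord `{0, g-1}`) with the path `g-1, g, …, n-1`
attached at the vertex `g-1`.  For `g < n` its unique pendant vertex is `n-1`.
For `g = n` this is the cycle `C_n`. -/
def lollipop (n g : ℕ) : SimpleGraph (Fin n) :=
  SimpleGraph.fromRel (fun i j =>
    (i : ℕ) + 1 = (j : ℕ) ∨ ((i : ℕ) = 0 ∧ (j : ℕ) = g - 1))

/-- The cycle `C_n` on `n` vertices. -/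
def cycleG (n : ℕ) : SimpleGraph (Fin n) := lollipop n n

/-- The graph `C_{m₁,m₂}ⁿ`: a cycle `C_{m₁}` on `0, …, m₁-1`, a cycle `C_{m₂}`
on `n-m₂, …, n-1`, joined by the path `m₁-1, m₁, …, n-m₂` (which degenerates to
a single identified vertex when `n = m₁+m₂-1`). -/
def dumbbell (n m₁ m₂ : ℕ) : SimpleGraph (Fin n) :=
  SimpleGraph.fromRel (fun i j =>
    (i : ℕ) + 1 = (j : ℕ) ∨ ((i : ℕ) = 0 ∧ (j : ℕ) = m₁ - 1)
      ∨ ((i : ℕ) = n - m₂ ∧ (j : ℕ) = n - 1))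

/-- Identify the vertex `w` of `H` with the vertex `u` of `G`:  the resulting
graph on `U ⊕ {x : W // x ≠ w}` whose edges are those of `G`, those of `H` not
meeting `w`, and the edges of `H` at `w` re-attached at `u`. -/
def glue {U W : Type*} (G : SimpleGraph U) (u : U) (H : SimpleGraph W) (w : W) :
    SimpleGraph (U ⊕ {x : W // x ≠ w}) :=
  SimpleGraph.fromRel (fun a b =>
    match a, b with
    | Sum.inl x, Sum.inl y => G.Adj x y
    | Sum.inl x, Sum.inr y => x = u ∧ H.Adj w y.val
    | Sum.inr x, Sum.inr y => H.Adj x.val y.val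
    | _, _ => False)


section AuxTriangleFree

variable {V : Type*} {G : SimpleGraph V}

variable {V : Type*} {G : SimpleGraph V}

lemma reachable_induce_of_walk {s : Set V} :
    ∀ {a b : V} (p : G.Walk a b), (∀ x ∈ p.support, x ∈ s) →
      ∀ (ha : a ∈ s) (hb : b ∈ s), (G.induce s).Reachable ⟨a, ha⟩ ⟨b, hb⟩
  | a, _, Walk.nil, _, ha, hb => Reachable.refl _
  | a, b, Walk.cons (v := c) h q, hs, ha, hb => by
    have hc : c ∈ s := hs c (by simp)
    have hadj : (G.induce s).Adj ⟨a, ha⟩ ⟨c, hc⟩ := by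
      simp only [comap_adj, Function.Embedding.coe_subtype]
      exact h
    exact hadj.reachable.trans
      (reachable_induce_of_walk q (fun x hx => hs x (by simp [hx])) hc hb)

lemma walk_of_reachable_induce {s : Set V} {a b : V} {ha : a ∈ s} {hb : b ∈ s}
    (h : (G.induce s).Reachable ⟨a, ha⟩ ⟨b, hb⟩) :
    ∃ p : G.Walk a b, ∀ x ∈ p.support, x ∈ s := by
  obtain ⟨q⟩ := h
  refine ⟨q.map (SimpleGraph.Embedding.induce s).toHom, ?_⟩
  intro x hx
  have hx' : x ∈ (q.map (SimpleGraph.Embedding.induce s).toHom).support := hx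
  rw [Walk.support_map, List.mem_map] at hx'
  obtain ⟨y, _, rfl⟩ := hx'
  exact y.2

lemma detour_walk {u v : V} (p : (G.deleteEdges {s(u,v)}).Walk u v) :
    ∀ {a b : V} (q : G.Walk a b), ∃ r : (G.deleteEdges {s(u,v)}).Walk a b,
      ∀ x ∈ r.support, x ∈ q.support ∨ x ∈ p.support
  | a, _, Walk.nil => ⟨Walk.nil, by simp⟩
  | a, b, Walk.cons (v := c) h q => by
    obtain ⟨r', hr'⟩ := detour_walk p q
    by_cases he : s(a, c) = s(u, v)
    · rw [Sym2.eq_iff] at he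
      rcases he with ⟨rfl, rfl⟩ | ⟨rfl, rfl⟩
      · refine ⟨p.append r', ?_⟩
        intro x hx
        rcases (Walk.mem_support_append_iff _ _).mp hx with h1 | h1
        · exact Or.inr h1
        · rcases hr' x h1 with h2 | h2
          · exact Or.inl (by simp [Walk.support_cons, h2])
          · exact Or.inr h2
      · refine ⟨p.reverse.append r', ?_⟩
        intro x hx
        rcases (Walk.mem_support_append_iff _ _).mp hx with h1 | h1
        · rw [Walk.support_reverse, List.mem_reverse] at h1
          exact Or.inr h1
        · rcases hr' x h1 with h2 | h2
          · exact Or.inl (by simp [Walk.support_cons, h2])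
          · exact Or.inr h2
    · have hadj : (G.deleteEdges {s(u,v)}).Adj a c := by
        rw [SimpleGraph.deleteEdges_adj]
        exact ⟨h, by simpa using he⟩
      refine ⟨Walk.cons hadj r', ?_⟩
      intro x hx
      rw [Walk.support_cons, List.mem_cons] at hx
      rcases hx with rfl | hx
      · exact Or.inl (by simp)
      · rcases hr' x hx with h2 | h2
        · exact Or.inl (by simp [Walk.support_cons, h2])
        · exact Or.inr h2

lemma truncate_walk {u v : V} :
    ∀ {a b : V} (p : G.Walk a b), (b = u ∨ b = v) →
    ∃ (z : V) (q : G.Walk a z), (z = u ∨ z = v) ∧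
      (∀ x ∈ q.support, x ∈ p.support) ∧
      (∀ y ∈ q.support, y = z ∨ (y ≠ u ∧ y ≠ v))
  | a, _, Walk.nil, hb =>
    ⟨a, Walk.nil, hb, by simp, fun y hy => Or.inl (by simpa using hy)⟩
  | a, b, Walk.cons (v := c) h q, hb => by
    by_cases ha : a = u ∨ a = v
    · exact ⟨a, Walk.nil, ha, by simp, fun y hy => Or.inl (by simpa using hy)⟩
    · obtain ⟨z, r, hz, hsub, hys⟩ := truncate_walk q hb
      push_neg at ha
      refine ⟨z, Walk.cons h r, hz, ?_, ?_⟩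
      · intro x hx
        rw [Walk.support_cons, List.mem_cons] at hx
        rcases hx with rfl | hx
        · simp
        · rw [Walk.support_cons, List.mem_cons]
          exact Or.inr (hsub x hx)
      · intro y hy
        rw [Walk.support_cons, List.mem_cons] at hy
        rcases hy with rfl | hy
        · exact Or.inr ha
        · exact hys y hy

lemma no_outside_neighbor {u v w : V}
    (huv : u ≠ v) (huw : u ≠ w) (hvw : v ≠ w)
    (Cw : (G.induce ({w}ᶜ : Set V)).Connected)
    (NW2 : ¬ ∃ p : G.Walk v w, u ∉ p.support ∧ s(v, w) ∉ p.edges)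
    (NW3 : ¬ ∃ p : G.Walk w u, v ∉ p.support ∧ s(w, u) ∉ p.edges)
    {t : V} (hadj : G.Adj w t) (htu : t ≠ u) (htv : t ≠ v) : False := by
  have htw : t ≠ w := hadj.ne'
  have ht : t ∈ ({w}ᶜ : Set V) := htw
  have hu : u ∈ ({w}ᶜ : Set V) := huw
  obtain ⟨p, hp⟩ := walk_of_reachable_induce (Cw.preconnected ⟨t, ht⟩ ⟨u, hu⟩)
  obtain ⟨z, q, hz, hsub, hys⟩ := truncate_walk (u := u) (v := v) p (Or.inl rfl)
  have hwq : w ∉ q.support := fun hmem => (hp w (hsub w hmem)) rfl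
  rcases hz with rfl | rfl
  · -- z = u : the walk  w —t— ⋯ — u  avoids v and the edge wu
    apply NW3
    refine ⟨Walk.cons hadj q, ?_, ?_⟩
    · rw [Walk.support_cons, List.mem_cons]
      rintro (h | h)
      · exact hvw h
      · rcases hys v h with h' | h'
        · exact huv h'.symm
        · exact h'.2 rfl
    · rw [Walk.edges_cons, List.mem_cons]
      rintro (h | h)
      · rcases Sym2.eq_iff.mp h with ⟨_, h2⟩ | ⟨h1, _⟩
        · exact htu h2.symm
        · exact htw h1.symm
      · exact hwq (Walk.fst_mem_support_of_mem_edges q h)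
  · -- z = v : reversing gives a walk  v — ⋯ —t— w  avoiding u and the edge vw
    apply NW2
    refine ⟨(Walk.cons hadj q).reverse, ?_, ?_⟩
    · rw [Walk.support_reverse, List.mem_reverse, Walk.support_cons, List.mem_cons]
      rintro (h | h)
      · exact huw h
      · rcases hys u h with h' | h'
        · exact huv h'
        · exact h'.1 rfl
    · rw [Walk.edges_reverse, List.mem_reverse, Walk.edges_cons, List.mem_cons]
      rintro (h | h)
      · rcases Sym2.eq_iff.mp h with ⟨h1, _⟩ | ⟨h1, _⟩
        · exact hvw h1
        · exact htv h1.symm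
      · exact hwq (Walk.snd_mem_support_of_mem_edges q h)

lemma find_attach {u v w : V} :
    ∀ {a : V} (_ : G.Walk a u), a ≠ u → a ≠ v → a ≠ w →
    ∃ t m, t ≠ u ∧ t ≠ v ∧ t ≠ w ∧ (m = u ∨ m = v ∨ m = w) ∧ G.Adj t m
  | _, Walk.nil, ha, _, _ => absurd rfl ha
  | a, Walk.cons (v := c) h p, ha, hav, haw => by
    by_cases hc : c = u ∨ c = v ∨ c = w
    · exact ⟨a, c, ha, hav, haw, hc, h⟩
    · push_neg at hc
      exact find_attach p hc.1 hc.2.1 hc.2.2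

end AuxTriangleFree

lemma key_lemma {n k : ℕ} {G : SimpleGraph (Fin n)} (hG : G.Connected)
    (hcut : cutVertexCount G = k)
    (hmax : ∀ H : SimpleGraph (Fin n), H.Connected → cutVertexCount H = k →
      wienerIndex H ≤ wienerIndex G)
    {u v w : Fin n} (huv : u ≠ v) (huw : u ≠ w) (hvw : v ≠ w)
    (auv : G.Adj u v) (auw : G.Adj u w) (avw : G.Adj v w) :
    (G.induce ({w}ᶜ : Set (Fin n))).Connected ∧
      ¬ ∃ p : G.Walk u v, w ∉ p.support ∧ s(u, v) ∉ p.edges := by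
  set G' := G.deleteEdges {s(u, v)} with hG'def
  have hne1 : s(u, w) ≠ s(u, v) := by
    rw [Ne, Sym2.eq_iff]
    rintro (⟨-, h⟩ | ⟨h, -⟩)
    · exact hvw h.symm
    · exact huv h
  have hne2 : s(w, v) ≠ s(u, v) := by
    rw [Ne, Sym2.eq_iff]
    rintro (⟨h, -⟩ | ⟨h, -⟩)
    · exact huw h.symm
    · exact hvw h.symm
  have a'uw : G'.Adj u w := by
    rw [hG'def, SimpleGraph.deleteEdges_adj]
    exact ⟨auw, by simpa using hne1⟩
  have a'wv : G'.Adj w v := by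
    rw [hG'def, SimpleGraph.deleteEdges_adj]
    exact ⟨avw.symm, by simpa using hne2⟩
  set p0 : G'.Walk u v := Walk.cons a'uw a'wv.toWalk with hp0def
  have hp0supp : p0.support = [u, w, v] := rfl
  have hG' : G'.Connected := by
    rw [connected_iff]
    refine ⟨fun a b => ?_, hG.nonempty⟩
    obtain ⟨q⟩ := hG.preconnected a b
    obtain ⟨r, -⟩ := detour_walk p0 q
    exact ⟨r⟩
  -- cut vertices of G are cut vertices of G'
  have h1 : ∀ x, IsCutVertex G x → IsCutVertex G' x := by
    intro x hx hc
    refine hx (hc.mono ?_)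
    intro a b hab
    have hab' : G'.Adj ↑a ↑b := hab
    rw [hG'def, SimpleGraph.deleteEdges_adj] at hab'
    exact hab'.1
  -- the only possible new cut vertex of G' is w
  have h2 : ∀ x, IsCutVertex G' x → x = w ∨ IsCutVertex G x := by
    intro x hx
    by_cases hxw : x = w
    · exact Or.inl hxw
    right
    by_contra hxc
    apply hx
    have hconn : (G.induce ({x}ᶜ : Set (Fin n))).Connected := not_not.mp hxc
    by_cases hxu : x = u
    · subst hxu
      refine hconn.mono ?_
      intro a b hab
      have hab' : G.Adj ↑a ↑b := hab
      show G'.Adj ↑a ↑b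
      rw [hG'def, SimpleGraph.deleteEdges_adj]
      refine ⟨hab', ?_⟩
      simp only [Set.mem_singleton_iff]
      rw [Sym2.eq_iff]
      rintro (⟨h, -⟩ | ⟨-, h⟩)
      · exact a.2 h
      · exact b.2 h
    by_cases hxv : x = v
    · subst hxv
      refine hconn.mono ?_
      intro a b hab
      have hab' : G.Adj ↑a ↑b := hab
      show G'.Adj ↑a ↑b
      rw [hG'def, SimpleGraph.deleteEdges_adj]
      refine ⟨hab', ?_⟩
      simp only [Set.mem_singleton_iff]
      rw [Sym2.eq_iff]
      rintro (⟨-, h⟩ | ⟨h, -⟩)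
      · exact b.2 h
      · exact a.2 h
    · rw [connected_iff]
      refine ⟨?_, ⟨⟨u, fun h => hxu ((Set.mem_singleton_iff.mp h).symm)⟩⟩⟩
      rintro ⟨a, ha⟩ ⟨b, hb⟩
      obtain ⟨q, hq⟩ := walk_of_reachable_induce (hconn.preconnected ⟨a, ha⟩ ⟨b, hb⟩)
      obtain ⟨r, hr⟩ := detour_walk p0 q
      refine reachable_induce_of_walk r ?_ ha hb
      intro y hy
      rcases hr y hy with h | h
      · exact hq y h
      · rw [hp0supp] at h
        intro hyx
        rw [Set.mem_singleton_iff] at hyx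
        subst hyx
        simp only [List.mem_cons, List.not_mem_nil, or_false] at h
        rcases h with rfl | rfl | rfl
        · exact hxu rfl
        · exact hxw rfl
        · exact hxv rfl
  by_cases hk' : cutVertexCount G' = k
  · -- Wiener index strictly increases: contradiction with maximality
    exfalso
    have hle := hmax G' hG' hk'
    have hmono : ∀ a b, G.dist a b ≤ G'.dist a b := by
      intro a b
      obtain ⟨r, hr⟩ := (hG'.preconnected a b).exists_walk_length_eq_dist
      calc G.dist a b ≤ (r.mapLe (G.deleteEdges_le _)).length := SimpleGraph.dist_le _
        _ = r.length := Walk.length_map _ _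
        _ = G'.dist a b := hr
    have hstrict : ∀ a b, G.Adj a b → ¬ G'.Adj a b → G.dist a b < G'.dist a b := by
      intro a b hab hab'
      have h1 : G.dist a b = 1 := dist_eq_one_iff_adj.mpr hab
      have h2 : G'.dist a b ≠ 1 := fun h => hab' (dist_eq_one_iff_adj.mp h)
      have h3 : 0 < G'.dist a b := hG'.pos_dist_of_ne hab.ne
      omega
    have hnadj : ¬ G'.Adj u v := by
      rw [hG'def, SimpleGraph.deleteEdges_adj]
      simp
    have hnadj' : ¬ G'.Adj v u := fun h => hnadj h.symm
    have hfu : (∑ b, G.dist u b) < ∑ b, G'.dist u b :=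
      Finset.sum_lt_sum (fun b _ => hmono u b)
        ⟨v, Finset.mem_univ v, hstrict u v auv hnadj⟩
    have hfv : (∑ b, G.dist v b) < ∑ b, G'.dist v b :=
      Finset.sum_lt_sum (fun b _ => hmono v b)
        ⟨u, Finset.mem_univ u, hstrict v u auv.symm hnadj'⟩
    have hkey : (∑ a, ∑ b, G.dist a b) + 2 ≤ ∑ a, ∑ b, G'.dist a b := by
      rw [← Finset.sum_add_sum_compl {u, v} (fun a => ∑ b, G.dist a b),
        ← Finset.sum_add_sum_compl {u, v} (fun a => ∑ b, G'.dist a b),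
        Finset.sum_pair huv, Finset.sum_pair huv]
      have h3 : (∑ a ∈ ({u, v} : Finset (Fin n))ᶜ, ∑ b, G.dist a b)
          ≤ ∑ a ∈ ({u, v} : Finset (Fin n))ᶜ, ∑ b, G'.dist a b :=
        Finset.sum_le_sum fun a _ => Finset.sum_le_sum fun b _ => hmono a b
      omega
    have hwlt : wienerIndex G < wienerIndex G' := by
      have hdiv := Nat.div_le_div_right (c := 2) hkey
      rw [Nat.add_div_right _ (by norm_num)] at hdiv
      unfold wienerIndex
      omega
    omega
  · -- w is a new cut vertex of G'
    have hw : ¬ IsCutVertex G w := by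
      intro hw
      apply hk'
      have hSeq : {x | IsCutVertex G' x} = {x | IsCutVertex G x} :=
        Set.ext fun x => ⟨fun hx => (h2 x hx).elim (fun h => h ▸ hw) id, h1 x⟩
      rw [cutVertexCount, hSeq, ← cutVertexCount, hcut]
    have hw' : IsCutVertex G' w := by
      by_contra hw'
      apply hk'
      have hSeq : {x | IsCutVertex G' x} = {x | IsCutVertex G x} :=
        Set.ext fun x => ⟨fun hx => (h2 x hx).resolve_left
          (fun e => hw' (e ▸ hx)), h1 x⟩
      rw [cutVertexCount, hSeq, ← cutVertexCount, hcut]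
    have Cw : (G.induce ({w}ᶜ : Set (Fin n))).Connected := not_not.mp hw
    refine ⟨Cw, ?_⟩
    rintro ⟨p, hps, hpe⟩
    apply hw'
    obtain ⟨p', hp'supp⟩ : ∃ q : G'.Walk u v, q.support = p.support :=
      ⟨p.toDeleteEdges {s(u, v)}
        (fun e he => by simp only [Set.mem_singleton_iff]; rintro rfl; exact hpe he),
        Walk.support_transfer _ _⟩
    rw [connected_iff]
    refine ⟨?_, ⟨⟨u, fun h => huw (Set.mem_singleton_iff.mp h)⟩⟩⟩
    rintro ⟨a, ha⟩ ⟨b, hb⟩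
    obtain ⟨q, hq⟩ := walk_of_reachable_induce (Cw.preconnected ⟨a, ha⟩ ⟨b, hb⟩)
    obtain ⟨r, hr⟩ := detour_walk p' q
    refine reachable_induce_of_walk r ?_ ha hb
    intro y hy
    rcases hr y hy with h | h
    · exact hq y h
    · rw [hp'supp] at h
      intro hyw
      rw [Set.mem_singleton_iff] at hyw
      exact hps (hyw ▸ h)

/-- A graph maximizing the Wiener index among connected graphs on `n ≥ 4`
vertices with exactly `k` cut vertices (`0 ≤ k ≤ n-3`) is triangle-free. -/
theorem stmt2 (n k : ℕ) (hn : 4 ≤ n) (hk : k ≤ n - 3)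
    (G : SimpleGraph (Fin n)) (hG : G.Connected) (hcut : cutVertexCount G = k)
    (hmax : ∀ H : SimpleGraph (Fin n), H.Connected → cutVertexCount H = k →
      wienerIndex H ≤ wienerIndex G) :
    G.CliqueFree 3 := by
  intro T hT
  obtain ⟨u, v, w, huv, huw, hvw, rfl⟩ := Finset.card_eq_three.mp hT.card_eq
  have auv : G.Adj u v := hT.1 (by simp) (by simp) huv
  have auw : G.Adj u w := hT.1 (by simp) (by simp) huw
  have avw : G.Adj v w := hT.1 (by simp) (by simp) hvw
  obtain ⟨Cw, NWuvw⟩ := key_lemma hG hcut hmax huv huw hvw auv auw avw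
  obtain ⟨Cu, NWvwu⟩ := key_lemma hG hcut hmax hvw huv.symm huw.symm avw auv.symm auw.symm
  obtain ⟨Cv, NWwuv⟩ := key_lemma hG hcut hmax huw.symm hvw.symm huv auw.symm avw.symm auv
  -- there is a vertex outside the triangle
  have hx : ∃ x : Fin n, x ≠ u ∧ x ≠ v ∧ x ≠ w := by
    by_contra hxall
    push_neg at hxall
    have hsub : (Finset.univ : Finset (Fin n)) ⊆ {u, v, w} := by
      intro x _
      rcases Decidable.em (x = u) with rfl | hxu
      · simp
      rcases Decidable.em (x = v) with rfl | hxv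
      · simp
      have := hxall x hxu hxv
      subst this
      simp
    have hle3 := Finset.card_le_card hsub
    rw [Finset.card_univ, Fintype.card_fin, hT.card_eq] at hle3
    omega
  obtain ⟨x, hxu, hxv, hxw⟩ := hx
  obtain ⟨p⟩ := hG.preconnected x u
  obtain ⟨t, m, htu, htv, htw, hm, hadj⟩ := find_attach p hxu hxv hxw
  rcases hm with rfl | rfl | rfl
  · -- attached at u : use the rotated instance (v, w, u)
    exact no_outside_neighbor hvw huv.symm huw.symm Cu NWwuv NWuvw hadj.symm htv htw
  · -- attached at v : use the rotated instance (w, u, v)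
    exact no_outside_neighbor huw.symm hvw.symm huv Cv NWuvw NWvwu hadj.symm htw htu
  · -- attached at w
    exact no_outside_neighbor huv huw hvw Cw NWvwu NWwuv hadj.symm htu htv
end

section
/- Let 3 ≤ g ≤ n and let v be the pendant vertex of the graph L_{n,g} (for g < n; for g = n interpret v as any vertex of the cycle C_n). Then the distance of v in L_{n,g} equals g²/4 + (n−g)(n+g−1)/2 if g is even, and (g²−1)/4 + (n−g)(n+g−1)/2 if g is odd. -/
open SimpleGraph

variable {V : Type*}

private def lf (n g i : ℕ) : ℕ :=
  if g - 1 ≤ i then n - 1 - i else (n - g) + min (g - 1 - i) (i + 1)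

lemma lollipop_adj' {n g : ℕ} {a b : Fin n} (h : (lollipop n g).Adj a b) :
    (a:ℕ) ≠ (b:ℕ) ∧ (((a:ℕ)+1 = (b:ℕ) ∨ ((a:ℕ) = 0 ∧ (b:ℕ) = g-1)) ∨
      ((b:ℕ)+1 = (a:ℕ) ∨ ((b:ℕ) = 0 ∧ (a:ℕ) = g-1))) := by
  rw [lollipop, SimpleGraph.fromRel_adj] at h
  exact ⟨fun hv => h.1 (Fin.ext hv), h.2⟩

lemma lollipop_adj_of {n g : ℕ} {a b : Fin n}
    (hne : (a:ℕ) ≠ (b:ℕ))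
    (hr : (a:ℕ)+1 = (b:ℕ) ∨ ((a:ℕ) = 0 ∧ (b:ℕ) = g-1)) :
    (lollipop n g).Adj a b := by
  rw [lollipop, SimpleGraph.fromRel_adj]
  exact ⟨fun hv => hne (by rw [hv]), Or.inl hr⟩

lemma lf_lip {n g : ℕ} (hg : 3 ≤ g) (hgn : g ≤ n) {a b : Fin n}
    (h : (lollipop n g).Adj a b) : lf n g (b:ℕ) ≤ lf n g (a:ℕ) + 1 := by
  obtain ⟨hne, hr⟩ := lollipop_adj' h
  have ha := a.isLt; have hb := b.isLt
  unfold lf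
  split_ifs <;> omega

lemma lf_le_length {n g : ℕ} (hg : 3 ≤ g) (hgn : g ≤ n) {a b : Fin n}
    (p : (lollipop n g).Walk a b) : lf n g (b:ℕ) ≤ lf n g (a:ℕ) + p.length := by
  induction p with
  | nil => simp
  | cons h p ih =>
      have := lf_lip hg hgn h
      simp only [SimpleGraph.Walk.length_cons]
      omega

lemma lf_descent {n g : ℕ} (hg : 3 ≤ g) (hgn : g ≤ n) (u : Fin n)
    (hu : (u:ℕ) ≠ n - 1) :
    ∃ w : Fin n, (lollipop n g).Adj w u ∧ lf n g (w:ℕ) < lf n g (u:ℕ) := by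
  have hun := u.isLt
  by_cases h1 : g - 1 ≤ (u:ℕ)
  · -- on the path, go forward
    refine ⟨⟨(u:ℕ)+1, by omega⟩, (lollipop_adj_of ?_ ?_).symm, ?_⟩
    · simp only [Fin.val_mk]; omega
    · left; rfl
    · show lf n g ((u:ℕ)+1) < lf n g (u:ℕ)
      unfold lf; split_ifs <;> omega
  · by_cases h0 : (u:ℕ) = 0
    · -- chord to g-1
      refine ⟨⟨g-1, by omega⟩, (lollipop_adj_of ?_ ?_).symm, ?_⟩
      · simp only [Fin.val_mk]; omega
      · right; exact ⟨h0, rfl⟩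
      · show lf n g (g-1) < lf n g (u:ℕ)
        rw [h0]; unfold lf; split_ifs <;> omega
    · by_cases h2 : g - 1 - (u:ℕ) ≤ (u:ℕ) + 1
      · refine ⟨⟨(u:ℕ)+1, by omega⟩, (lollipop_adj_of ?_ ?_).symm, ?_⟩
        · simp only [Fin.val_mk]; omega
        · left; rfl
        · show lf n g ((u:ℕ)+1) < lf n g (u:ℕ)
          unfold lf; split_ifs <;> omega
      · refine ⟨⟨(u:ℕ)-1, by omega⟩, lollipop_adj_of ?_ ?_, ?_⟩
        · simp only [Fin.val_mk]; omega
        · left; simp only [Fin.val_mk]; omega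
        · show lf n g ((u:ℕ)-1) < lf n g (u:ℕ)
          unfold lf; split_ifs <;> omega

lemma lollipop_dist {n g : ℕ} (hg : 3 ≤ g) (hgn : g ≤ n) (u : Fin n) :
    (lollipop n g).Reachable ⟨n-1, Nat.sub_lt (by omega) Nat.one_pos⟩ u ∧
      (lollipop n g).dist ⟨n-1, Nat.sub_lt (by omega) Nat.one_pos⟩ u = lf n g (u:ℕ) := by
  set v : Fin n := ⟨n-1, Nat.sub_lt (by omega) Nat.one_pos⟩ with hv
  have hfv : lf n g (v:ℕ) = 0 := by
    show lf n g (n-1) = 0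
    unfold lf; split_ifs <;> omega
  -- upper bound by strong induction
  have upper : ∀ k (u : Fin n), lf n g (u:ℕ) = k →
      (lollipop n g).Reachable v u ∧ (lollipop n g).dist v u ≤ k := by
    intro k
    induction k using Nat.strong_induction_on with
    | _ k ih =>
      intro u hk
      by_cases huv : (u:ℕ) = n - 1
      · have : u = v := Fin.ext (by simp [hv, huv])
        subst this
        exact ⟨SimpleGraph.Reachable.refl v, by rw [SimpleGraph.dist_self]; exact Nat.zero_le k⟩
      · obtain ⟨w, hadj, hlt⟩ := lf_descent hg hgn u huv
        obtain ⟨hreach, hdist⟩ := ih (lf n g (w:ℕ)) (by omega) w rfl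
        refine ⟨hreach.trans hadj.reachable, ?_⟩
        obtain ⟨p, hp⟩ := hreach.exists_walk_length_eq_dist
        have := SimpleGraph.dist_le (p.concat hadj)
        rw [SimpleGraph.Walk.length_concat] at this
        omega
  obtain ⟨hreach, hle⟩ := upper _ u rfl
  refine ⟨hreach, le_antisymm hle ?_⟩
  obtain ⟨p, hp⟩ := hreach.exists_walk_length_eq_dist
  have := lf_le_length hg hgn p
  omega

lemma sumMin (m : ℕ) : ∑ i ∈ Finset.range m, min (m - i) (i + 1) = (m+1)^2/4 := by
  induction m with
  | zero => simp
  | succ m ih =>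
    rw [Finset.sum_range_succ]
    have step : ∀ i ∈ Finset.range m,
        min (m+1-i) (i+1) = min (m-i) (i+1) + if m ≤ 2*i then 1 else 0 := by
      intro i hi
      rw [Finset.mem_range] at hi
      split_ifs with h <;> omega
    rw [Finset.sum_congr rfl step, Finset.sum_add_distrib, ih, ← Finset.card_filter]
    have hfil : (Finset.range m).filter (fun i => m ≤ 2*i) = Finset.Ico ((m+1)/2) m := by
      ext i
      simp only [Finset.mem_filter, Finset.mem_range, Finset.mem_Ico]
      omega
    rw [hfil, Nat.card_Ico]
    have h1 : (m+1)^2 = m*m + 2*m + 1 := by ring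
    have h2 : (m+1+1)^2 = m*m + 4*m + 4 := by ring
    have h3 : m % 2 = 0 → m*m % 4 = 0 := by
      intro h
      obtain ⟨s, hs⟩ : ∃ s, m = 2*s := ⟨m/2, by omega⟩
      subst hs
      have e : 2*s*(2*s) = 4*(s*s) := by ring
      rw [e]
      generalize s*s = t
      omega
    have h4 : m % 2 = 1 → m*m % 4 = 1 := by
      intro h
      obtain ⟨s, hs⟩ : ∃ s, m = 2*s+1 := ⟨m/2, by omega⟩
      subst hs
      have e : (2*s+1)*(2*s+1) = 4*(s*s+s)+1 := by ring
      rw [e]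
      generalize s*s+s = t
      omega
    rw [h1, h2]
    generalize m*m = t at h3 h4 ⊢
    omega

/-- The distance of the pendant vertex of `L_{n,g}` (interpreted as the vertex
`n-1`, which for `g = n` is just a vertex of the cycle `C_n`). -/
theorem stmt3 (n g : ℕ) (hg3 : 3 ≤ g) (hgn : g ≤ n) :
    vertexDistance (lollipop n g) ⟨n - 1, by omega⟩ =
      (if Even g then g ^ 2 / 4 else (g ^ 2 - 1) / 4)
        + (n - g) * (n + g - 1) / 2 := by
  obtain ⟨a, rfl⟩ : ∃ a, n = g + a := ⟨n - g, by omega⟩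
  unfold vertexDistance
  have hd : ∀ u : Fin (g+a), (lollipop (g+a) g).dist ⟨g+a-1, by omega⟩ u = lf (g+a) g (u:ℕ) :=
    fun u => (lollipop_dist hg3 (by omega) u).2
  rw [Finset.sum_congr rfl (fun u _ => hd u)]
  rw [Fin.sum_univ_eq_sum_range (fun i => lf (g+a) g i)]
  rw [Finset.range_eq_Ico,
    ← Finset.sum_Ico_consecutive _ (Nat.zero_le (g-1)) (by omega : g-1 ≤ g+a)]
  have hA : ∑ i ∈ Finset.Ico 0 (g-1), lf (g+a) g i = (g-1)*a + g^2/4 := by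
    rw [← Finset.range_eq_Ico]
    have step : ∀ i ∈ Finset.range (g-1), lf (g+a) g i = a + min (g-1-i) (i+1) := by
      intro i hi
      rw [Finset.mem_range] at hi
      unfold lf
      rw [if_neg (by omega), Nat.add_sub_cancel_left]
    rw [Finset.sum_congr rfl step, Finset.sum_add_distrib, Finset.sum_const,
      Finset.card_range, smul_eq_mul, sumMin (g-1)]
    have h1 : g - 1 + 1 = g := by omega
    rw [h1, Nat.mul_comm]
  have hB : ∑ i ∈ Finset.Ico (g-1) (g+a), lf (g+a) g i = (a+1)*a/2 := by
    rw [Finset.sum_Ico_eq_sum_range]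
    have hm : g + a - (g-1) = a + 1 := by omega
    rw [hm]
    have step : ∀ i ∈ Finset.range (a+1), lf (g+a) g (g-1+i) = (a+1)-1-i := by
      intro i hi
      rw [Finset.mem_range] at hi
      unfold lf
      rw [if_pos (by omega)]
      omega
    rw [Finset.sum_congr rfl step, Finset.sum_range_reflect (fun j => j) (a+1),
      Finset.sum_range_id, Nat.add_sub_cancel]
  rw [hA, hB, Nat.add_sub_cancel_left]
  have h2 : a * (g+a+g-1) = (a+1)*a + 2*((g-1)*a) := by
    have h : g+a+g-1 = a+1+2*(g-1) := by omega
    rw [h]; ring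
  have h5 : (a+1)*a % 2 = 0 := by
    rw [Nat.mul_comm]
    exact Nat.even_iff.mp (Nat.even_mul_succ_self a)
  by_cases he : Even g
  · rw [if_pos he]
    obtain ⟨k, hk⟩ := he
    have h6 : g^2 % 4 = 0 := by
      subst hk
      have h : (k+k)^2 = 4*(k*k) := by ring
      rw [h]
      generalize k*k = t
      omega
    have key : ∀ A Q B C : ℕ, C = B + 2*A → B % 2 = 0 → Q % 4 = 0 →
        A + Q/4 + B/2 = Q/4 + C/2 := by intro A Q B C x y z; omega
    exact key _ _ _ _ h2 h5 h6
  · rw [if_neg he]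
    obtain ⟨k, hk⟩ := Nat.not_even_iff_odd.mp he
    have h6 : g^2 % 4 = 1 := by
      subst hk
      have h : (2*k+1)^2 = 4*(k*k+k)+1 := by ring
      rw [h]
      generalize k*k+k = t
      omega
    have key : ∀ A Q B C : ℕ, C = B + 2*A → B % 2 = 0 → Q % 4 = 1 →
        A + Q/4 + B/2 = (Q-1)/4 + C/2 := by intro A Q B C x y z; omega
    exact key _ _ _ _ h2 h5 h6
end

section
/- Let G be a connected graph on n vertices with exactly k cut vertices, where k ≥ 2. Then G has at least two s-pendant blocks. -/
open SimpleGraph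

variable {V : Type*}

section Aux
set_option linter.unusedSectionVars false
variable [DecidableEq V] {G : SimpleGraph V}

lemma conn_iff (S : Set V) : (G.induce S).Connected ↔
    S.Nonempty ∧ ∀ u ∈ S, ∀ v ∈ S, ∃ p : G.Walk u v, ∀ x ∈ p.support, x ∈ S := by
  rw [connected_induce_iff, Subgraph.connected_iff_forall_exists_walk_subgraph]
  simp only [Subgraph.induce_verts, Subgraph.verts_top]
  constructor
  · rintro ⟨hne, h⟩
    refine ⟨hne, fun u hu v hv => ?_⟩
    obtain ⟨p, hp⟩ := h hu hv
    exact ⟨p, fun x hx => hp.1 (by rwa [Walk.mem_verts_toSubgraph])⟩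
  · rintro ⟨hne, h⟩
    refine ⟨hne, fun {u v} hu hv => ?_⟩
    obtain ⟨p, hp⟩ := h u hu v hv
    refine ⟨p, ⟨fun x hx => hp x (by rwa [Walk.mem_verts_toSubgraph] at hx), ?_⟩⟩
    intro x y hxy
    have hadj : G.Adj x y := p.toSubgraph.adj_sub hxy
    have hx := hp x (by rw [← Walk.mem_verts_toSubgraph]; exact hxy.fst_mem)
    have hy := hp y (by rw [← Walk.mem_verts_toSubgraph]; exact hxy.snd_mem)
    simp [Subgraph.induce_adj, hx, hy, hadj]

def ReachIn (G : SimpleGraph V) (S : Set V) (u v : V) : Prop :=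
  ∃ p : G.Walk u v, ∀ x ∈ p.support, x ∈ S

def comp (G : SimpleGraph V) (S : Set V) (x : V) : Set V := {y | ReachIn G S x y}

namespace ReachIn

lemma mem_left {S : Set V} {u v : V} (h : ReachIn G S u v) : u ∈ S :=
  h.choose_spec u h.choose.start_mem_support

lemma mem_right {S : Set V} {u v : V} (h : ReachIn G S u v) : v ∈ S :=
  h.choose_spec v h.choose.end_mem_support

lemma refl {S : Set V} {u : V} (hu : u ∈ S) : ReachIn G S u u :=
  ⟨Walk.nil, by simpa using hu⟩

lemma symm {S : Set V} {u v : V} (h : ReachIn G S u v) : ReachIn G S v u := by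
  obtain ⟨p, hp⟩ := h
  exact ⟨p.reverse, by simpa [Walk.support_reverse] using hp⟩

lemma trans {S : Set V} {u v w : V} (h : ReachIn G S u v) (h' : ReachIn G S v w) :
    ReachIn G S u w := by
  obtain ⟨p, hp⟩ := h; obtain ⟨q, hq⟩ := h'
  refine ⟨p.append q, fun x hx => ?_⟩
  rw [Walk.support_append, List.mem_append] at hx
  exact hx.elim (hp x) (fun h => hq x (List.tail_subset _ h))

lemma adj {S : Set V} {u v : V} (hu : u ∈ S) (hv : v ∈ S) (h : G.Adj u v) :
    ReachIn G S u v :=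
  ⟨Walk.cons h Walk.nil, by simp [hu, hv]⟩

end ReachIn

lemma comp_subset {S : Set V} {x : V} : comp G S x ⊆ S := fun _ h => h.mem_right

lemma mem_comp_self {S : Set V} {x : V} (hx : x ∈ S) : x ∈ comp G S x := ReachIn.refl hx

lemma walk_subset_comp {S : Set V} {x u y : V} (hu : u ∈ comp G S x) (p : G.Walk u y)
    (hp : ∀ z ∈ p.support, z ∈ S) : ∀ z ∈ p.support, z ∈ comp G S x := by
  intro z hz
  exact hu.trans ⟨p.takeUntil z hz, fun w hw => hp w (p.support_takeUntil_subset hz hw)⟩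

lemma comp_eq_of_mem {S : Set V} {x y : V} (h : y ∈ comp G S x) : comp G S y = comp G S x := by
  ext z
  exact ⟨fun hz => ReachIn.trans h hz, fun hz => ReachIn.trans h.symm hz⟩

lemma adj_mem_comp {S : Set V} {x z y : V} (hz : z ∈ comp G S x) (hy : y ∈ S)
    (h : G.Adj z y) : y ∈ comp G S x :=
  hz.trans (ReachIn.adj hz.mem_right hy h)

lemma conn_comp {S : Set V} {x : V} (hx : x ∈ S) : (G.induce (comp G S x)).Connected := by
  rw [conn_iff]
  refine ⟨⟨x, mem_comp_self hx⟩, fun u hu v hv => ?_⟩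
  obtain ⟨p, hp⟩ := (hu : ReachIn G S x u)
  obtain ⟨q, hq⟩ := (hv : ReachIn G S x v)
  refine ⟨p.reverse.append q, fun z hz => ?_⟩
  rw [Walk.support_append, List.mem_append] at hz
  rcases hz with hz | hz
  · rw [Walk.support_reverse, List.mem_reverse] at hz
    exact walk_subset_comp (mem_comp_self hx) p hp z hz
  · exact walk_subset_comp (mem_comp_self hx) q hq z (List.tail_subset _ hz)

lemma exists_adj_comp' {b x : V} (q : G.Walk b x) (hq : q.IsPath) (hxb : x ≠ b) :
    ∃ w ∈ comp G ({b}ᶜ : Set V) x, G.Adj b w := by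
  cases q with
  | nil => exact absurd rfl hxb
  | cons h r =>
    rename_i w
    rw [Walk.cons_isPath_iff] at hq
    refine ⟨w, ?_, h⟩
    refine ReachIn.symm ⟨r, fun z hz => ?_⟩
    simp only [Set.mem_compl_iff, Set.mem_singleton_iff]
    rintro rfl; exact hq.2 hz

lemma exists_adj_comp (hG : G.Connected) {x b : V} (hxb : x ≠ b) :
    ∃ w ∈ comp G ({b}ᶜ : Set V) x, G.Adj b w := by
  obtain ⟨p⟩ := hG.preconnected b x
  exact exists_adj_comp' (p.toPath : G.Walk b x) p.toPath.2 hxb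

lemma cut_iff_comp {b : V} (hne : ({b}ᶜ : Set V).Nonempty) :
    IsCutVertex G b ↔ ∃ x ∈ ({b}ᶜ : Set V), ∃ y ∈ ({b}ᶜ : Set V), ¬ ReachIn G {b}ᶜ x y := by
  unfold IsCutVertex
  rw [conn_iff]
  push_neg
  constructor
  · intro h
    obtain ⟨u,hu,v,hv,hw⟩ := h hne
    refine ⟨u,hu,v,hv, fun hr => ?_⟩
    obtain ⟨p,hp⟩ := hr
    obtain ⟨x,hx,hx'⟩ := hw p
    exact hx' (hp x hx)
  · rintro ⟨u,hu,v,hv,hr⟩ _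
    refine ⟨u,hu,v,hv, fun p => ?_⟩
    by_contra hc; push_neg at hc; exact hr ⟨p, hc⟩



def doubleInduceIso (S : Set V) (v : ↥S) :
    (G.induce S).induce ({v}ᶜ : Set ↥S) ≃g G.induce (S \ {(v : V)}) where
  toFun := fun x => ⟨x.1.1, x.1.2, fun h => x.2 (by simpa using Subtype.ext h)⟩
  invFun := fun y => ⟨⟨y.1, y.2.1⟩, fun h => y.2.2 (by simpa using congrArg Subtype.val h)⟩
  left_inv := fun x => rfl
  right_inv := fun y => rfl
  map_rel_iff' := Iff.rfl

lemma cut_induce_iff {S : Set V} (v : ↥S) :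
    IsCutVertex (G.induce S) v ↔ ¬ (G.induce (S \ {(v : V)})).Connected := by
  unfold IsCutVertex
  rw [(doubleInduceIso S v).connected_iff]

/-- "Good" sets: connected, and still connected after deleting any one vertex. -/
def GC (G : SimpleGraph V) (S : Set V) : Prop :=
  (G.induce S).Connected ∧ ∀ v ∈ S, (G.induce (S \ {v})).Connected

lemma nocut_iff {S : Set V} :
    (∀ v : S, ¬ IsCutVertex (G.induce S) v) ↔ ∀ v ∈ S, (G.induce (S \ {v})).Connected := by
  constructor
  · intro h v hv
    have := h ⟨v, hv⟩
    rw [cut_induce_iff, not_not] at this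
    exact this
  · intro h v
    rw [cut_induce_iff, not_not]
    exact h v v.2

lemma isBlock_iff {B : Set V} :
    IsBlock G B ↔ 2 ≤ B.ncard ∧ GC G B ∧ ∀ C, B ⊆ C → GC G C → C = B := by
  unfold IsBlock GC
  constructor
  · rintro ⟨h1, h2, h3, h4⟩
    exact ⟨h1, ⟨h2, nocut_iff.mp h3⟩, fun C hBC hC => h4 C hBC hC.1 (nocut_iff.mpr hC.2)⟩
  · rintro ⟨h1, ⟨h2, h3⟩, h4⟩
    exact ⟨h1, h2, nocut_iff.mpr h3, fun C hBC hc hnc => h4 C hBC ⟨hc, nocut_iff.mp hnc⟩⟩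

lemma IsBlock.gc {B : Set V} (h : IsBlock G B) : GC G B := (isBlock_iff.mp h).2.1

lemma IsBlock.two_le {B : Set V} (h : IsBlock G B) : 2 ≤ B.ncard := (isBlock_iff.mp h).1

lemma IsBlock.max' {B : Set V} (h : IsBlock G B) : ∀ C, B ⊆ C → GC G C → C = B :=
  (isBlock_iff.mp h).2.2

lemma GC.conn_diff {B : Set V} (h : GC G B) (c : V) : (G.induce (B \ {c})).Connected := by
  by_cases hc : c ∈ B
  · exact h.2 c hc
  · rw [Set.diff_singleton_eq_self hc]; exact h.1

lemma conn_singleton (x : V) : (G.induce {x}).Connected := by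
  rw [connected_iff]
  refine ⟨fun a b => ?_, ⟨⟨x, rfl⟩⟩⟩
  have : a = b := Subtype.ext (a.2.trans b.2.symm)
  exact this ▸ Reachable.refl _

lemma pair_diff_left' {a b : V} (hab : a ≠ b) : ({a, b} : Set V) \ {a} = {b} := by
  ext z
  simp only [Set.mem_diff, Set.mem_insert_iff, Set.mem_singleton_iff]
  constructor
  · rintro ⟨(rfl | rfl), hza⟩
    · exact absurd rfl hza
    · rfl
  · rintro rfl
    exact ⟨Or.inr rfl, fun h2 => hab h2.symm⟩

lemma pair_diff_right' {a b : V} (hab : a ≠ b) : ({a, b} : Set V) \ {b} = {a} := by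
  rw [Set.pair_comm]; exact pair_diff_left' hab.symm

lemma GC_pair {u v : V} (h : G.Adj u v) : GC G {u, v} := by
  refine ⟨induce_pair_connected_of_adj h, fun w hw => ?_⟩
  rcases hw with rfl | rfl
  · rw [pair_diff_left' h.ne]; exact conn_singleton v
  · rw [pair_diff_right' h.ne]; exact conn_singleton u

lemma exists_block_superset [Fintype V] {S : Set V} (hS : GC G S) (h2 : 2 ≤ S.ncard) :
    ∃ B, IsBlock G B ∧ S ⊆ B := by
  classical
  have hfin : ({C : Set V | S ⊆ C ∧ GC G C}).Finite := Set.toFinite _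
  obtain ⟨B, ⟨hSB, hGCB⟩, hmax⟩ :=
    Set.Finite.exists_maximalFor Set.ncard _ hfin ⟨S, subset_rfl, hS⟩
  refine ⟨B, isBlock_iff.mpr ⟨le_trans h2 (Set.ncard_le_ncard hSB (Set.toFinite B)), hGCB,
    fun C hBC hC => ?_⟩, hSB⟩
  have hCmem : C ∈ {C : Set V | S ⊆ C ∧ GC G C} := ⟨hSB.trans hBC, hC⟩
  have := hmax hCmem (Set.ncard_le_ncard hBC (Set.toFinite C))
  exact (Set.eq_of_subset_of_ncard_le hBC this (Set.toFinite C)).symm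

lemma walk_cons_split {v x : V} (R : G.Walk v x) (hR : R.IsPath) (hvx : v ≠ x) :
    ∃ (w : V) (Q : G.Walk w x), G.Adj v w ∧ R.support = v :: Q.support ∧
      v ∉ Q.support ∧ Q.IsPath := by
  cases R with
  | nil => exact absurd rfl hvx
  | cons h Q =>
    rw [Walk.cons_isPath_iff] at hR
    exact ⟨_, Q, h, Walk.support_cons h Q, hR.2, hR.1⟩

lemma path_split_at {x y v : V} (P : G.Walk x y) (hP : P.IsPath) (hv : v ∈ P.support)
    (hvx : v ≠ x) (hvy : v ≠ y) :
    ∃ (w w' : V) (Q : G.Walk w x) (Q' : G.Walk w' y),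
      (∀ z, (z ∈ P.support ∧ z ≠ v) ↔ (z ∈ Q.support ∨ z ∈ Q'.support)) := by
  have hP1 : (P.takeUntil v hv).IsPath := hP.takeUntil hv
  have hP2 : (P.dropUntil v hv).IsPath := hP.dropUntil hv
  obtain ⟨w, Q, hadj, hsupp1, hnv1, hQ⟩ :=
    walk_cons_split (P.takeUntil v hv).reverse hP1.reverse hvx
  obtain ⟨w', Q', hadj', hsupp2, hnv2, hQ'⟩ := walk_cons_split (P.dropUntil v hv) hP2 hvy
  refine ⟨w, w', Q, Q', fun z => ?_⟩
  have hPsup : z ∈ P.support ↔ z ∈ (P.takeUntil v hv).support ∨ z ∈ Q'.support := by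
    conv_lhs => rw [← P.take_spec hv]
    rw [Walk.support_append, List.mem_append, hsupp2]
    simp
  have h1 : z ∈ (P.takeUntil v hv).support ↔ z = v ∨ z ∈ Q.support := by
    rw [← List.mem_reverse, ← Walk.support_reverse, hsupp1]
    simp
  rw [hPsup, h1]
  constructor
  · rintro ⟨(rfl | hz) | hz, hzv⟩
    · exact absurd rfl hzv
    · exact Or.inl hz
    · exact Or.inr hz
  · rintro (hz | hz)
    · exact ⟨Or.inl (Or.inr hz), fun h => hnv1 (h ▸ hz)⟩
    · exact ⟨Or.inr hz, fun h => hnv2 (h ▸ hz)⟩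

lemma exists_prefix_first_hit {s b : V} (Q : G.Walk s b) {T : Set V} (hb : b ∈ T) :
    ∃ (p : V) (R : G.Walk s p), p ∈ T ∧ (∀ z ∈ R.support, z ∈ Q.support) ∧
      (∀ z ∈ R.support, z ∈ T → z = p) := by
  induction Q with
  | nil => exact ⟨_, Walk.nil, hb, by simp, by simp⟩
  | cons h Q' ih =>
    rename_i u u' w
    by_cases hs : u ∈ T
    · exact ⟨u, Walk.nil, hs, by simp, by simp⟩
    · obtain ⟨p, R, hp, hsub, hfirst⟩ := ih hb
      refine ⟨p, Walk.cons h R, hp, ?_, ?_⟩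
      · intro z hz
        rw [Walk.support_cons, List.mem_cons] at hz ⊢
        exact hz.elim Or.inl (fun h2 => Or.inr (hsub z h2))
      · intro z hz hzT
        rw [Walk.support_cons, List.mem_cons] at hz
        rcases hz with rfl | hz
        · exact absurd hzT hs
        · exact hfirst z hz hzT

lemma exists_boundary {x y : V} (P : G.Walk x y) {B : Set V} (hx : x ∈ B) (hy : y ∉ B) :
    ∃ t s', G.Adj t s' ∧ t ∈ B ∧ s' ∉ B ∧ t ∈ P.support ∧ s' ∈ P.support := by
  induction P with
  | nil => exact absurd hx hy
  | cons h P' ih =>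
    rename_i u u' w
    by_cases hu' : u' ∈ B
    · obtain ⟨t, s', h1, h2, h3, h4, h5⟩ := ih hu' hy
      exact ⟨t, s', h1, h2, h3, by simp [h4], by simp [h5]⟩
    · exact ⟨u, u', h, hx, hu', by simp, by simp⟩

lemma ReachIn.mono {S T : Set V} (hST : S ⊆ T) {u v : V} (h : ReachIn G S u v) :
    ReachIn G T u v := by
  obtain ⟨p, hp⟩ := h
  exact ⟨p, fun z hz => hST (hp z hz)⟩

lemma conn_subset_comp {S T : Set V} (hT : (G.induce T).Connected) (hTS : T ⊆ S) {x : V}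
    (hx : x ∈ T) : T ⊆ comp G S x := by
  intro y hy
  obtain ⟨_, hwalks⟩ := (conn_iff T).mp hT
  obtain ⟨p, hp⟩ := hwalks x hx y hy
  exact ⟨p, fun z hz => hTS (hp z hz)⟩

lemma walk_avoiding_subset_comp {S : Set V} {u t : V} (Q : G.Walk u t)
    (hQ : ∀ z ∈ Q.support, z ∈ S) {x : V} (ht : t ∈ comp G S x) :
    ∀ z ∈ Q.support, z ∈ comp G S x := by
  intro z hz
  have := walk_subset_comp ht Q.reverse (by simpa [Walk.support_reverse] using hQ)
  exact this z (by simpa [Walk.support_reverse] using hz)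

lemma ear [Fintype V] (hG : G.Connected) {B : Set V} (hB : IsBlock G B) {t s : V}
    (ht : t ∈ B) (hs : s ∉ B) (hadj : G.Adj t s) : IsCutVertex G t := by
  by_contra hnc
  rw [IsCutVertex, not_not] at hnc
  obtain ⟨b, hbB, hbt⟩ := Set.exists_ne_of_one_lt_ncard
    (lt_of_lt_of_le one_lt_two hB.two_le) t
  have hst : s ≠ t := hadj.ne'
  obtain ⟨_, hwalks⟩ := (conn_iff _).mp hnc
  obtain ⟨W, hW⟩ := hwalks s (by simpa using hst) b (by simpa using hbt)
  obtain ⟨p, R, hp, hsubW, hfirst⟩ := exists_prefix_first_hit W hbB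
  set R₀ : G.Walk s p := (R.toPath : G.Walk s p) with hR₀def
  have hpath : R₀.IsPath := R.toPath.2
  have hsub : ∀ z ∈ R₀.support, z ∈ R.support := fun z hz => R.support_toPath_subset hz
  have hfirst₀ : ∀ z ∈ R₀.support, z ∈ B → z = p := fun z hz => hfirst z (hsub z hz)
  have htR₀ : t ∉ R₀.support := by
    intro h
    have := hW t (hsubW t (hsub t h))
    simp at this
  have hsp : s ≠ p := fun h => hs (h ▸ hp)
  set C : Set V := B ∪ {z | z ∈ R₀.support} with hCdef
  have hpC : p ∈ R₀.support := R₀.end_mem_support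
  have hsC : s ∈ R₀.support := R₀.start_mem_support
  have hGCC : GC G C := by
    constructor
    · exact induce_union_connected hB.gc.1.preconnected (Walk.connected_induce_support R₀).preconnected
        ⟨p, hp, hpC⟩
    · intro v hv
      by_cases hvR : v ∈ R₀.support
      · by_cases hvp : v = p
        · subst hvp
          obtain ⟨w, Q, hadjvw, hsupp, hnv, hQ⟩ :=
            walk_cons_split R₀.reverse hpath.reverse (fun h => hsp h.symm)
          have hmem : ∀ z, z ∈ R₀.support ↔ z = v ∨ z ∈ Q.support := by
            intro z
            rw [← List.mem_reverse, ← Walk.support_reverse, hsupp]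
            simp
          have hCe : C \ {v} = (B \ {v}) ∪ {z | z ∈ Q.support} := by
            ext z
            simp only [hCdef, Set.mem_union, Set.mem_diff, Set.mem_setOf_eq,
              Set.mem_singleton_iff, hmem]
            have f1 : z ∈ Q.support → z ≠ v := fun h1 h2 => hnv (h2 ▸ h1)
            tauto
          rw [hCe]
          have htv : t ≠ v := fun h => htR₀ (h ▸ hvR)
          exact connected_induce_union (hB.gc.conn_diff v).preconnected
            (Walk.connected_induce_support Q).preconnected ⟨ht, htv⟩ Q.end_mem_support hadj
        · by_cases hvs : v = s
          · subst hvs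
            obtain ⟨w, Q, hadjvw, hsupp, hnv, hQ⟩ := walk_cons_split R₀ hpath hsp
            have hmem : ∀ z, z ∈ R₀.support ↔ z = v ∨ z ∈ Q.support := by
              intro z; rw [hsupp]; simp
            have hCe : C \ {v} = B ∪ {z | z ∈ Q.support} := by
              ext z
              simp only [hCdef, Set.mem_union, Set.mem_diff, Set.mem_setOf_eq,
                Set.mem_singleton_iff, hmem]
              have f1 : z ∈ Q.support → z ≠ v := fun h1 h2 => hnv (h2 ▸ h1)
              have f2 : z ∈ B → z ≠ v := fun h1 h2 => hs (h2 ▸ h1)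
              tauto
            rw [hCe]
            exact induce_union_connected hB.gc.1.preconnected (Walk.connected_induce_support Q).preconnected
              ⟨p, hp, Q.end_mem_support⟩
          · obtain ⟨w, w', Q, Q', hiff⟩ := path_split_at R₀ hpath hvR hvs hvp
            have hvB : v ∉ B := fun h => hvp (hfirst₀ v hvR h)
            have hCe : C \ {v} = ((B \ {v}) ∪ {z | z ∈ Q'.support}) ∪ {z | z ∈ Q.support} := by
              ext z
              simp only [hCdef, Set.mem_union, Set.mem_diff, Set.mem_setOf_eq,
                Set.mem_singleton_iff]
              have f1 := hiff z
              have f2 : z ∈ Q.support → z ≠ v := fun h1 => ((f1.mpr (Or.inl h1)).2)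
              have f3 : z ∈ Q'.support → z ≠ v := fun h1 => ((f1.mpr (Or.inr h1)).2)
              have f4 : z ∈ Q.support → z ∈ R₀.support := fun h1 => (f1.mpr (Or.inl h1)).1
              have f5 : z ∈ Q'.support → z ∈ R₀.support := fun h1 => (f1.mpr (Or.inr h1)).1
              have f6 : z ∈ B → z ≠ v := fun h1 h2 => hvB (h2 ▸ h1)
              constructor
              · rintro ⟨hz | hz, hzv⟩
                · exact Or.inl (Or.inl ⟨hz, hzv⟩)
                · rcases (f1.mp ⟨hz, hzv⟩) with h1 | h1
                  · exact Or.inr h1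
                  · exact Or.inl (Or.inr h1)
              · rintro ((⟨hz, hzv⟩ | hz) | hz)
                · exact ⟨Or.inl hz, hzv⟩
                · exact ⟨Or.inr (f5 hz), f3 hz⟩
                · exact ⟨Or.inr (f4 hz), f2 hz⟩
            rw [hCe]
            have hpv : p ≠ v := fun h => hvp h.symm
            have htv : t ≠ v := fun h => htR₀ (h ▸ hvR)
            have c1 : (G.induce ((B \ {v}) ∪ {z | z ∈ Q'.support})).Connected :=
              induce_union_connected (hB.gc.conn_diff v).preconnected (Walk.connected_induce_support Q').preconnected
                ⟨p, ⟨hp, hpv⟩, Q'.end_mem_support⟩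
            exact connected_induce_union c1.preconnected (Walk.connected_induce_support Q).preconnected
              (Or.inl ⟨ht, htv⟩) Q.end_mem_support hadj
      · have hCe : C \ {v} = (B \ {v}) ∪ {z | z ∈ R₀.support} := by
          ext z
          simp only [hCdef, Set.mem_union, Set.mem_diff, Set.mem_setOf_eq,
            Set.mem_singleton_iff]
          have f1 : z ∈ R₀.support → z ≠ v := fun h1 h2 => hvR (h2 ▸ h1)
          tauto
        rw [hCe]
        have hpv : p ≠ v := fun h => hvR (h ▸ hpC)
        exact induce_union_connected (hB.gc.conn_diff v).preconnected (Walk.connected_induce_support R₀).preconnected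
          ⟨p, ⟨hp, hpv⟩, hpC⟩
  have hCB := hB.max' C Set.subset_union_left hGCC
  exact hs (hCB ▸ (Or.inr hsC : s ∈ C))

lemma block_unique_comp [Fintype V] {B₁ B₂ : Set V} (h₁ : IsBlock G B₁) (h₂ : IsBlock G B₂)
    {a x y : V} (ha₁ : a ∈ B₁) (ha₂ : a ∈ B₂) (hx : x ∈ B₁) (hxa : x ≠ a)
    (hy : y ∈ B₂) (hya : y ≠ a) (hreach : ReachIn G ({a}ᶜ : Set V) x y) : B₁ = B₂ := by
  obtain ⟨W, hW⟩ := hreach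
  set P : G.Walk x y := (W.toPath : G.Walk x y) with hPdef
  have hpath : P.IsPath := W.toPath.2
  have hPa : a ∉ P.support := by
    intro h
    have := hW a (W.support_toPath_subset h)
    simp at this
  set C : Set V := (B₁ ∪ {z | z ∈ P.support}) ∪ B₂ with hCdef
  have hxP : x ∈ P.support := P.start_mem_support
  have hyP : y ∈ P.support := P.end_mem_support
  have hGCC : GC G C := by
    constructor
    · exact induce_union_connected
        (induce_union_connected h₁.gc.1.preconnected (Walk.connected_induce_support P).preconnected ⟨x, hx, hxP⟩).preconnected
        h₂.gc.1.preconnected ⟨y, Or.inr hyP, hy⟩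
    · intro v hv
      by_cases hvP : v ∈ P.support
      · have hva : v ≠ a := fun h => hPa (h ▸ hvP)
        have haB₁ : a ∈ B₁ \ {v} := ⟨ha₁, fun h => hva (h.symm)⟩
        have haB₂ : a ∈ B₂ \ {v} := ⟨ha₂, fun h => hva (h.symm)⟩
        have hD : (G.induce ((B₁ \ {v}) ∪ (B₂ \ {v}))).Connected :=
          induce_union_connected (h₁.gc.conn_diff v).preconnected (h₂.gc.conn_diff v).preconnected ⟨a, haB₁, haB₂⟩
        by_cases hvx : v = x
        · subst hvx
          by_cases hxy : v = y
          · subst hxy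
            have hnil : P = Walk.nil := (Walk.isPath_iff_eq_nil (p := P)).mp hpath
            have hCe : C \ {v} = (B₁ \ {v}) ∪ (B₂ \ {v}) := by
              ext z
              simp only [hCdef, hnil, Set.mem_union, Set.mem_diff, Set.mem_setOf_eq,
                Set.mem_singleton_iff, Walk.support_nil, List.mem_singleton]
              tauto
            rw [hCe]; exact hD
          · obtain ⟨w, Q, hadjvw, hsupp, hnv, hQ⟩ := walk_cons_split P hpath hxy
            have hmem : ∀ z, z ∈ P.support ↔ z = v ∨ z ∈ Q.support := by
              intro z; rw [hsupp]; simp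
            have hCe : C \ {v} = ((B₁ \ {v}) ∪ (B₂ \ {v})) ∪ {z | z ∈ Q.support} := by
              ext z
              simp only [hCdef, Set.mem_union, Set.mem_diff, Set.mem_setOf_eq,
                Set.mem_singleton_iff, hmem]
              have f1 : z ∈ Q.support → z ≠ v := fun h1 h2 => hnv (h2 ▸ h1)
              tauto
            rw [hCe]
            have hyv : y ≠ v := fun h => hxy h.symm
            exact induce_union_connected hD.preconnected (Walk.connected_induce_support Q).preconnected
              ⟨y, Or.inr ⟨hy, hyv⟩, Q.end_mem_support⟩
        · by_cases hvy : v = y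
          · subst hvy
            obtain ⟨w, Q, hadjvw, hsupp, hnv, hQ⟩ :=
              walk_cons_split P.reverse hpath.reverse hvx
            have hmem : ∀ z, z ∈ P.support ↔ z = v ∨ z ∈ Q.support := by
              intro z
              rw [← List.mem_reverse, ← Walk.support_reverse, hsupp]
              simp
            have hCe : C \ {v} = ((B₁ \ {v}) ∪ (B₂ \ {v})) ∪ {z | z ∈ Q.support} := by
              ext z
              simp only [hCdef, Set.mem_union, Set.mem_diff, Set.mem_setOf_eq,
                Set.mem_singleton_iff, hmem]
              have f1 : z ∈ Q.support → z ≠ v := fun h1 h2 => hnv (h2 ▸ h1)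
              tauto
            rw [hCe]
            have hxv : x ≠ v := fun h => hvx h.symm
            exact induce_union_connected hD.preconnected (Walk.connected_induce_support Q).preconnected
              ⟨x, Or.inl ⟨hx, hxv⟩, Q.end_mem_support⟩
          · obtain ⟨w, w', Q, Q', hiff⟩ := path_split_at P hpath hvP hvx hvy
            have hCe : C \ {v} =
                (((B₁ \ {v}) ∪ (B₂ \ {v})) ∪ {z | z ∈ Q.support}) ∪ {z | z ∈ Q'.support} := by
              ext z
              simp only [hCdef, Set.mem_union, Set.mem_diff, Set.mem_setOf_eq,
                Set.mem_singleton_iff]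
              have f1 := hiff z
              have f2 : z ∈ Q.support → z ∈ P.support ∧ z ≠ v := fun h1 => f1.mpr (Or.inl h1)
              have f3 : z ∈ Q'.support → z ∈ P.support ∧ z ≠ v := fun h1 => f1.mpr (Or.inr h1)
              constructor
              · rintro ⟨(hz | hz) | hz, hzv⟩
                · exact Or.inl (Or.inl (Or.inl ⟨hz, hzv⟩))
                · rcases f1.mp ⟨hz, hzv⟩ with h1 | h1
                  · exact Or.inl (Or.inr h1)
                  · exact Or.inr h1
                · exact Or.inl (Or.inl (Or.inr ⟨hz, hzv⟩))
              · rintro ((((hz | hz)) | hz) | hz)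
                · exact ⟨Or.inl (Or.inl hz.1), hz.2⟩
                · exact ⟨Or.inr hz.1, hz.2⟩
                · exact ⟨Or.inl (Or.inr (f2 hz).1), (f2 hz).2⟩
                · exact ⟨Or.inl (Or.inr (f3 hz).1), (f3 hz).2⟩
            rw [hCe]
            have hxv : x ≠ v := fun h => hvx h.symm
            have hyv : y ≠ v := fun h => hvy h.symm
            have c1 := induce_union_connected hD.preconnected (Walk.connected_induce_support Q).preconnected
              ⟨x, Or.inl ⟨hx, hxv⟩, Q.end_mem_support⟩
            exact induce_union_connected c1.preconnected (Walk.connected_induce_support Q').preconnected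
              ⟨y, Or.inl (Or.inr ⟨hy, hyv⟩), Q'.end_mem_support⟩
      · have hCe : C \ {v} = (((B₁ \ {v}) ∪ (B₂ \ {v})) ∪ {z | z ∈ P.support}) := by
          ext z
          simp only [hCdef, Set.mem_union, Set.mem_diff, Set.mem_setOf_eq,
            Set.mem_singleton_iff]
          have f1 : z ∈ P.support → z ≠ v := fun h1 h2 => hvP (h2 ▸ h1)
          tauto
        rw [hCe]
        have hxv : x ≠ v := fun h => hvP (h ▸ hxP)
        have hyv : y ≠ v := fun h => hvP (h ▸ hyP)
        by_cases hva : v = a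
        · subst hva
          have c1 := induce_union_connected (h₁.gc.conn_diff v).preconnected
            (Walk.connected_induce_support P).preconnected ⟨x, ⟨hx, hxv⟩, hxP⟩
          have c2 := induce_union_connected c1.preconnected (h₂.gc.conn_diff v).preconnected
            ⟨y, Or.inr hyP, ⟨hy, hyv⟩⟩
          rwa [Set.union_right_comm] at c2
        · have haB₁ : a ∈ B₁ \ {v} := ⟨ha₁, fun h => hva (h.symm)⟩
          have haB₂ : a ∈ B₂ \ {v} := ⟨ha₂, fun h => hva (h.symm)⟩
          have hD : (G.induce ((B₁ \ {v}) ∪ (B₂ \ {v}))).Connected :=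
            induce_union_connected (h₁.gc.conn_diff v).preconnected (h₂.gc.conn_diff v).preconnected ⟨a, haB₁, haB₂⟩
          exact induce_union_connected hD.preconnected (Walk.connected_induce_support P).preconnected
            ⟨x, Or.inl ⟨hx, hxv⟩, hxP⟩
  have e₁ := h₁.max' C (fun z hz => Or.inl (Or.inl hz)) hGCC
  have e₂ := h₂.max' C (fun z hz => Or.inr hz) hGCC
  rw [← e₁, ← e₂]



lemma mem_compl_ne {a z : V} (h : z ∈ ({a}ᶜ : Set V)) : z ≠ a := by simpa using h

lemma ne_mem_compl {a z : V} (h : z ≠ a) : z ∈ ({a}ᶜ : Set V) := by simpa using h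

lemma pendant_comp [Fintype V] (hG : G.Connected) {a x₀ : V} (hx₀ : x₀ ≠ a)
    (hfree : ∀ z ∈ comp G ({a}ᶜ : Set V) x₀, ¬ IsCutVertex G z) :
    IsBlock G (comp G ({a}ᶜ : Set V) x₀ ∪ {a}) ∧
      {v ∈ comp G ({a}ᶜ : Set V) x₀ ∪ {a} | IsCutVertex G v} ⊆ {a} := by
  set A : Set V := comp G ({a}ᶜ : Set V) x₀ with hAdef
  have hx₀A : x₀ ∈ A := mem_comp_self (ne_mem_compl hx₀)
  have haA : a ∉ A := fun h => mem_compl_ne (comp_subset h) rfl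
  have hconnA : (G.induce A).Connected := conn_comp (ne_mem_compl hx₀)
  obtain ⟨w₀, hw₀A, hw₀adj⟩ := exists_adj_comp hG hx₀
  have hGC : GC G (A ∪ {a}) := by
    constructor
    · exact connected_induce_union hconnA.preconnected (conn_singleton a).preconnected hw₀A rfl hw₀adj.symm
    · intro v hv
      rcases hv with hv | hveq
      case inr =>
        rw [Set.mem_singleton_iff] at hveq
        subst hveq
        have : (A ∪ {v}) \ {v} = A := by
          ext z
          simp only [Set.mem_diff, Set.mem_union, Set.mem_singleton_iff]
          constructor
          · rintro ⟨hz | rfl, hza⟩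
            · exact hz
            · exact absurd rfl hza
          · intro hz
            exact ⟨Or.inl hz, fun h => haA (h ▸ hz)⟩
        rw [this]; exact hconnA
      · -- v ∈ A, not a cut vertex of G
        have hva : v ≠ a := mem_compl_ne (comp_subset hv)
        have hGv : (G.induce ({v}ᶜ : Set V)).Connected := not_not.mp (hfree v hv)
        have key : ∀ u ∈ (A ∪ {a}) \ {v}, ReachIn G ((A ∪ {a}) \ {v}) a u := by
          intro u hu
          rcases hu with ⟨hu | rfl, huv⟩
          · have hua : u ≠ a := mem_compl_ne (comp_subset hu)
            obtain ⟨_, hwalks⟩ := (conn_iff _).mp hGv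
            obtain ⟨W, hW⟩ := hwalks a (ne_mem_compl (fun h => hva h.symm)) u
              (ne_mem_compl (fun h => huv h))
            set P : G.Walk a u := (W.toPath : G.Walk a u) with hPdef
            have hpath : P.IsPath := W.toPath.2
            have hPv : ∀ z ∈ P.support, z ≠ v := fun z hz =>
              mem_compl_ne (hW z (W.support_toPath_subset hz))
            obtain ⟨w, Q, hadjaw, hsupp, hna, hQ⟩ :=
              walk_cons_split P hpath (fun h => hua h.symm)
            have hQA : ∀ z ∈ Q.support, z ∈ A :=
              walk_avoiding_subset_comp Q
                (fun z hz => ne_mem_compl (fun h2 => hna (by rw [← h2]; exact hz))) hu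
            refine ⟨P, fun z hz => ?_⟩
            rw [hsupp, List.mem_cons] at hz
            rcases hz with rfl | hz
            · exact ⟨Or.inr rfl, fun h => hva (Set.mem_singleton_iff.mp h).symm⟩
            · exact ⟨Or.inl (hQA z hz), fun h => hPv z (by rw [hsupp]; exact List.mem_cons_of_mem _ hz) (Set.mem_singleton_iff.mp h)⟩
          · exact ReachIn.refl ⟨Or.inr rfl, fun h => hva (Set.mem_singleton_iff.mp h).symm⟩
        rw [conn_iff]
        refine ⟨⟨a, Or.inr rfl, fun h => hva (Set.mem_singleton_iff.mp h).symm⟩,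
          fun u₁ h₁ u₂ h₂ => ?_⟩
        exact (key u₁ h₁).symm.trans (key u₂ h₂)
  have hblock : IsBlock G (A ∪ {a}) := by
    rw [isBlock_iff]
    refine ⟨?_, hGC, ?_⟩
    · have hsub : ({x₀, a} : Set V) ⊆ A ∪ {a} := by
        rintro z (rfl | rfl)
        · exact Or.inl hx₀A
        · exact Or.inr rfl
      calc 2 = ({x₀, a} : Set V).ncard := (Set.ncard_pair hx₀).symm
        _ ≤ _ := Set.ncard_le_ncard hsub (Set.toFinite _)
    · intro C hsub hC
      refine le_antisymm ?_ hsub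
      intro t htC
      by_cases hta : t = a
      · exact Or.inr (by simp [hta])
      · left
        have hconn : (G.induce (C \ {a})).Connected := hC.2 a (hsub (Or.inr rfl))
        have hCsub : C \ {a} ⊆ ({a}ᶜ : Set V) := fun z hz =>
          ne_mem_compl (fun h => hz.2 (by simp [h]))
        have := conn_subset_comp hconn hCsub
          (x := x₀) ⟨hsub (Or.inl hx₀A), fun h => hx₀ (Set.mem_singleton_iff.mp h)⟩
        exact this ⟨htC, fun h => hta (Set.mem_singleton_iff.mp h)⟩
  refine ⟨hblock, fun z hz => ?_⟩
  obtain ⟨hz1, hz2⟩ := hz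
  rcases hz1 with hz1 | hz1
  · exact absurd hz2 (hfree z hz1)
  · exact hz1

lemma block_has_two_cuts [Fintype V] (hG : G.Connected) {B : Set V} (hB : IsBlock G B)
    {a x₀ : V} (haB : a ∈ B) (hBA : B \ {a} ⊆ comp G ({a}ᶜ : Set V) x₀) {c : V}
    (hc : c ∈ comp G ({a}ᶜ : Set V) x₀) (hccut : IsCutVertex G c) :
    ∃ t ∈ B, t ≠ a ∧ IsCutVertex G t := by
  by_cases hcB : c ∈ B
  · exact ⟨c, hcB, mem_compl_ne (comp_subset hc), hccut⟩
  · obtain ⟨z, hzB, hza⟩ := Set.exists_ne_of_one_lt_ncard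
      (lt_of_lt_of_le one_lt_two hB.two_le) a
    have hzA : z ∈ comp G ({a}ᶜ : Set V) x₀ := hBA ⟨hzB, hza⟩
    have hx₀mem : x₀ ∈ ({a}ᶜ : Set V) := hzA.mem_left
    obtain ⟨_, hwalks⟩ := (conn_iff _).mp (conn_comp hx₀mem)
    obtain ⟨P, hP⟩ := hwalks z hzA c hc
    obtain ⟨t, s', hadj, htB, hsB, htP, _⟩ := exists_boundary P hzB hcB
    exact ⟨t, htB, mem_compl_ne (comp_subset (hP t htP)), ear hG hB htB hsB hadj⟩

lemma nonpend_count [Fintype V] (hG : G.Connected) {b : V} (hbcut : IsCutVertex G b)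
    {x₀ : V} (hx₀ : x₀ ≠ b)
    (hcut₀ : ∃ c ∈ comp G ({b}ᶜ : Set V) x₀, IsCutVertex G c)
    (huniq : ∀ y, y ≠ b → (∃ c ∈ comp G ({b}ᶜ : Set V) y, IsCutVertex G c) →
      comp G ({b}ᶜ : Set V) y = comp G ({b}ᶜ : Set V) x₀) :
    ∃ B₀, {C : Set V | IsBlock G C ∧ ¬ IsPendantBlock G C ∧ b ∈ C} = {B₀} := by
  set A₀ : Set V := comp G ({b}ᶜ : Set V) x₀ with hA₀def
  obtain ⟨w₀, hw₀A, hw₀adj⟩ := exists_adj_comp hG hx₀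
  have hw₀b : w₀ ≠ b := mem_compl_ne (comp_subset hw₀A)
  obtain ⟨B₀, hB₀, hsubB₀⟩ := exists_block_superset (GC_pair hw₀adj)
    (le_of_eq (Set.ncard_pair hw₀adj.ne).symm)
  have hbB₀ : b ∈ B₀ := hsubB₀ (Or.inl rfl)
  have hw₀B₀ : w₀ ∈ B₀ := hsubB₀ (Or.inr rfl)
  have hB₀A : B₀ \ {b} ⊆ A₀ := by
    have hconn : (G.induce (B₀ \ {b})).Connected := hB₀.gc.conn_diff b
    have hsub : B₀ \ {b} ⊆ ({b}ᶜ : Set V) := fun z hz =>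
      ne_mem_compl (fun h => hz.2 (Set.mem_singleton_iff.mpr h))
    have h1 := conn_subset_comp hconn hsub (x := w₀)
      ⟨hw₀B₀, fun h => hw₀b (Set.mem_singleton_iff.mp h)⟩
    rwa [comp_eq_of_mem hw₀A] at h1
  have hB₀np : ¬ IsPendantBlock G B₀ := by
    obtain ⟨c, hc, hccut⟩ := hcut₀
    obtain ⟨t, htB, htb, htcut⟩ := block_has_two_cuts hG hB₀ hbB₀ hB₀A hc hccut
    rintro ⟨_, hcard⟩
    have hsub : ({b, t} : Set V) ⊆ {v ∈ B₀ | IsCutVertex G v} := by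
      rintro z (rfl | rfl)
      · exact ⟨hbB₀, hbcut⟩
      · exact ⟨htB, htcut⟩
    have : 2 ≤ ({v ∈ B₀ | IsCutVertex G v}).ncard := by
      calc 2 = ({b, t} : Set V).ncard := (Set.ncard_pair (fun h => htb h.symm)).symm
        _ ≤ _ := Set.ncard_le_ncard hsub (Set.toFinite _)
    omega
  refine ⟨B₀, ?_⟩
  ext C
  simp only [Set.mem_setOf_eq, Set.mem_singleton_iff]
  constructor
  · rintro ⟨hCb, hCnp, hbC⟩
    obtain ⟨z, hzC, hzb⟩ := Set.exists_ne_of_one_lt_ncard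
      (lt_of_lt_of_le one_lt_two hCb.two_le) b
    have hzbc : z ∈ ({b}ᶜ : Set V) := ne_mem_compl hzb
    set D : Set V := comp G ({b}ᶜ : Set V) z with hDdef
    have hzD : z ∈ D := mem_comp_self hzbc
    have hCD : C \ {b} ⊆ D := by
      have hconn : (G.induce (C \ {b})).Connected := hCb.gc.conn_diff b
      exact conn_subset_comp hconn
        (fun w hw => ne_mem_compl (fun h => hw.2 (Set.mem_singleton_iff.mpr h)))
        ⟨hzC, fun h => hzb (Set.mem_singleton_iff.mp h)⟩
    by_cases hDcut : ∃ c ∈ D, IsCutVertex G c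
    · have hDA : D = A₀ := huniq z hzb hDcut
      have hzA : z ∈ A₀ := hDA ▸ hzD
      have hreach : ReachIn G ({b}ᶜ : Set V) z w₀ :=
        (hzA : ReachIn G _ x₀ z).symm.trans (hw₀A : ReachIn G _ x₀ w₀)
      exact block_unique_comp hCb hB₀ hbC hbB₀ hzC hzb hw₀B₀ hw₀b hreach
    · push_neg at hDcut
      obtain ⟨hDblock, hDcutset⟩ := pendant_comp hG hzb hDcut
      have hCeq : C = D ∪ {b} :=
        block_unique_comp hCb hDblock hbC (Or.inr rfl) hzC hzb (Or.inl hzD) hzb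
          (ReachIn.refl hzbc)
      exfalso
      apply hCnp
      refine ⟨hCb, ?_⟩
      have : {v ∈ C | IsCutVertex G v} = {b} := by
        apply le_antisymm
        · intro v hv
          rw [hCeq] at hv
          exact hDcutset hv
        · rintro v rfl
          exact ⟨hbC, hbcut⟩
      rw [this, Set.ncard_singleton]
  · rintro rfl
    exact ⟨hB₀, hB₀np, hbB₀⟩

lemma spendant_of [Fintype V] (hG : G.Connected) {b : V} (hbcut : IsCutVertex G b)
    {x₀ : V} (hx₀ : x₀ ≠ b)
    (hcut₀ : ∃ c ∈ comp G ({b}ᶜ : Set V) x₀, IsCutVertex G c)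
    (huniq : ∀ y, y ≠ b → (∃ c ∈ comp G ({b}ᶜ : Set V) y, IsCutVertex G c) →
      comp G ({b}ᶜ : Set V) y = comp G ({b}ᶜ : Set V) x₀)
    {y : V} (hy : y ≠ b)
    (hfree : ∀ z ∈ comp G ({b}ᶜ : Set V) y, ¬ IsCutVertex G z) :
    IsSPendantBlock G (comp G ({b}ᶜ : Set V) y ∪ {b}) := by
  obtain ⟨hblock, hcutset⟩ := pendant_comp hG hy hfree
  have hcuteq : {v ∈ comp G ({b}ᶜ : Set V) y ∪ {b} | IsCutVertex G v} = {b} := by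
    apply le_antisymm hcutset
    rintro v rfl
    exact ⟨Or.inr rfl, hbcut⟩
  refine ⟨⟨hblock, by rw [hcuteq, Set.ncard_singleton]⟩, ?_⟩
  intro w hw hwcut
  have hwb : w = b := by
    rcases hw with hw | hw
    · exact absurd hwcut (hfree w hw)
    · exact hw
  subst hwb
  obtain ⟨B₀, hB₀⟩ := nonpend_count hG hbcut hx₀ hcut₀ huniq
  rw [hB₀, Set.ncard_singleton]

lemma comp_nested (hG : G.Connected) {a b x y : V}
    (hb : b ∈ comp G ({a}ᶜ : Set V) x) (hy : y ≠ b)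
    (ha : a ∉ comp G ({b}ᶜ : Set V) y) :
    comp G ({b}ᶜ : Set V) y ⊆ comp G ({a}ᶜ : Set V) x \ {b} := by
  have hab : b ≠ a := mem_compl_ne (comp_subset hb)
  intro u hu
  have hub : u ≠ b := mem_compl_ne (comp_subset hu)
  refine ⟨?_, fun h => hub (Set.mem_singleton_iff.mp h)⟩
  obtain ⟨w, hwD, hwadj⟩ := exists_adj_comp hG hy
  -- walk from u to w within comp {b}ᶜ y
  obtain ⟨_, hwalks⟩ := (conn_iff _).mp (conn_comp (G := G) (ne_mem_compl hy))
  obtain ⟨P, hP⟩ := hwalks u hu w hwD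
  -- extend by the edge w ~ b
  have hreach : ReachIn G ({a}ᶜ : Set V) u b := by
    refine ⟨P.append (Walk.cons hwadj.symm Walk.nil), fun z hz => ?_⟩
    rw [Walk.support_append, List.mem_append] at hz
    rcases hz with hz | hz
    · exact ne_mem_compl (fun h2 => ha (h2 ▸ hP z hz))
    · simp only [Walk.support_cons, Walk.support_nil, List.tail_cons, List.mem_singleton] at hz
      subst hz
      exact ne_mem_compl (fun h2 => hab h2)
  have : u ∈ comp G ({a}ᶜ : Set V) b := hreach.symm
  rwa [comp_eq_of_mem hb] at this

lemma rec_main [Fintype V] (hG : G.Connected) (m : ℕ) :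
    ∀ (a x : V), IsCutVertex G a → x ≠ a →
      (∃ b ∈ comp G ({a}ᶜ : Set V) x, IsCutVertex G b) →
      (comp G ({a}ᶜ : Set V) x).ncard ≤ m →
      ∃ B, IsSPendantBlock G B ∧ B ⊆ comp G ({a}ᶜ : Set V) x := by
  induction m with
  | zero =>
    intro a x _ hx _ hle
    exfalso
    have : x ∈ comp G ({a}ᶜ : Set V) x := mem_comp_self (ne_mem_compl hx)
    have hpos : 0 < (comp G ({a}ᶜ : Set V) x).ncard :=
      Set.ncard_pos (Set.toFinite _) |>.mpr ⟨x, this⟩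
    omega
  | succ m ih =>
    intro a x hacut hxa hcut hle
    obtain ⟨b, hbA, hbcut⟩ := hcut
    have hba : b ≠ a := mem_compl_ne (comp_subset hbA)
    by_cases hcase : ∃ y, y ≠ b ∧ a ∉ comp G ({b}ᶜ : Set V) y ∧
        ∃ c ∈ comp G ({b}ᶜ : Set V) y, IsCutVertex G c
    · obtain ⟨y, hyb, haD, hcD⟩ := hcase
      have hsub := comp_nested hG hbA hyb haD
      have hlt : (comp G ({b}ᶜ : Set V) y).ncard ≤ m := by
        have h1 : (comp G ({b}ᶜ : Set V) y).ncard ≤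
            ((comp G ({a}ᶜ : Set V) x) \ {b}).ncard :=
          Set.ncard_le_ncard hsub (Set.toFinite _)
        have h2 : ((comp G ({a}ᶜ : Set V) x) \ {b}).ncard <
            (comp G ({a}ᶜ : Set V) x).ncard :=
          Set.ncard_diff_singleton_lt_of_mem hbA (Set.toFinite _)
        omega
      obtain ⟨B, hB, hBsub⟩ := ih b y hbcut hyb hcD hlt
      exact ⟨B, hB, hBsub.trans (hsub.trans Set.diff_subset)⟩
    · push_neg at hcase
      have hab : a ≠ b := fun h => hba h.symm
      have hcut₀ : ∃ c ∈ comp G ({b}ᶜ : Set V) a, IsCutVertex G c :=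
        ⟨a, mem_comp_self (ne_mem_compl hab), hacut⟩
      have huniq : ∀ y, y ≠ b →
          (∃ c ∈ comp G ({b}ᶜ : Set V) y, IsCutVertex G c) →
          comp G ({b}ᶜ : Set V) y = comp G ({b}ᶜ : Set V) a := by
        intro y hyb hc
        by_cases haD : a ∈ comp G ({b}ᶜ : Set V) y
        · exact (comp_eq_of_mem haD).symm
        · exfalso
          obtain ⟨c, hcD, hccut⟩ := hc
          exact hcase y hyb haD c hcD hccut
      have hne : ({b}ᶜ : Set V).Nonempty := ⟨a, ne_mem_compl hab⟩
      obtain ⟨u, hu, v, hv, hnr⟩ := (cut_iff_comp hne).mp hbcut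
      have hyex : ∃ y, y ≠ b ∧ a ∉ comp G ({b}ᶜ : Set V) y := by
        by_cases hau : a ∈ comp G ({b}ᶜ : Set V) u
        · by_cases hav : a ∈ comp G ({b}ᶜ : Set V) v
          · exact absurd ((hau : ReachIn G _ u a).trans (hav : ReachIn G _ v a).symm) hnr
          · exact ⟨v, mem_compl_ne hv, hav⟩
        · exact ⟨u, mem_compl_ne hu, hau⟩
      obtain ⟨y, hyb, hay⟩ := hyex
      have hfree : ∀ z ∈ comp G ({b}ᶜ : Set V) y, ¬ IsCutVertex G z :=
        fun z hz => hcase y hyb hay z hz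
      have hsp := spendant_of hG hbcut hab hcut₀ huniq hyb hfree
      refine ⟨comp G ({b}ᶜ : Set V) y ∪ {b}, hsp, ?_⟩
      rintro z (hz | hz)
      · exact (comp_nested hG hbA hyb hay hz).1
      · rw [Set.mem_singleton_iff] at hz
        subst hz
        exact hbA

end Aux

/-- A connected graph with at least two cut vertices has at least two
s-pendant blocks. -/
theorem stmt4 (n k : ℕ) (hk : 2 ≤ k) (G : SimpleGraph (Fin n))
    (hG : G.Connected) (hcut : cutVertexCount G = k) :
    ∃ B₁ B₂ : Set (Fin n), B₁ ≠ B₂ ∧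
      IsSPendantBlock G B₁ ∧ IsSPendantBlock G B₂ := by
  classical
  have h1 : 1 < {v : Fin n | IsCutVertex G v}.ncard := by
    rw [cutVertexCount] at hcut; omega
  obtain ⟨c₁, c₂, hc₁, hc₂, hnecc⟩ := (Set.one_lt_ncard_iff (Set.toFinite _)).mp h1
  rw [Set.mem_setOf_eq] at hc₁ hc₂
  have hc₂c₁ : c₂ ≠ c₁ := fun h => hnecc h.symm
  have hc₂A : c₂ ∈ comp G ({c₁}ᶜ : Set (Fin n)) c₂ := mem_comp_self (ne_mem_compl hc₂c₁)
  obtain ⟨B₁, hB₁sp, hB₁sub⟩ := rec_main hG (comp G ({c₁}ᶜ : Set (Fin n)) c₂).ncard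
    c₁ c₂ hc₁ hc₂c₁ ⟨c₂, hc₂A, hc₂⟩ le_rfl
  by_cases hcase : ∃ y, y ≠ c₁ ∧ (∃ c ∈ comp G ({c₁}ᶜ : Set (Fin n)) y, IsCutVertex G c) ∧
      comp G ({c₁}ᶜ : Set (Fin n)) y ≠ comp G ({c₁}ᶜ : Set (Fin n)) c₂
  · obtain ⟨y, hyc₁, hcuty, hAne⟩ := hcase
    obtain ⟨B₂, hB₂sp, hB₂sub⟩ := rec_main hG (comp G ({c₁}ᶜ : Set (Fin n)) y).ncard
      c₁ y hc₁ hyc₁ hcuty le_rfl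
    refine ⟨B₁, B₂, ?_, hB₁sp, hB₂sp⟩
    intro heq
    have hB₁ne : B₁.Nonempty := by
      have h2 := hB₁sp.1.1.two_le
      exact Set.nonempty_of_ncard_ne_zero (by omega)
    obtain ⟨z, hz⟩ := hB₁ne
    have hzA : z ∈ comp G ({c₁}ᶜ : Set (Fin n)) c₂ := hB₁sub hz
    have hzY : z ∈ comp G ({c₁}ᶜ : Set (Fin n)) y := hB₂sub (heq ▸ hz)
    exact hAne ((comp_eq_of_mem hzY).symm.trans (comp_eq_of_mem hzA))
  · push_neg at hcase
    have hcut₀ : ∃ c ∈ comp G ({c₁}ᶜ : Set (Fin n)) c₂, IsCutVertex G c := ⟨c₂, hc₂A, hc₂⟩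
    have huniq : ∀ y, y ≠ c₁ →
        (∃ c ∈ comp G ({c₁}ᶜ : Set (Fin n)) y, IsCutVertex G c) →
        comp G ({c₁}ᶜ : Set (Fin n)) y = comp G ({c₁}ᶜ : Set (Fin n)) c₂ :=
      fun y h1 h2 => hcase y h1 h2
    have hne' : ({c₁}ᶜ : Set (Fin n)).Nonempty := ⟨c₂, ne_mem_compl hc₂c₁⟩
    obtain ⟨u, hu, v, hv, hnr⟩ := (cut_iff_comp hne').mp hc₁
    have hyex : ∃ y, y ≠ c₁ ∧
        comp G ({c₁}ᶜ : Set (Fin n)) y ≠ comp G ({c₁}ᶜ : Set (Fin n)) c₂ := by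
      by_cases hau : comp G ({c₁}ᶜ : Set (Fin n)) u = comp G ({c₁}ᶜ : Set (Fin n)) c₂
      · by_cases hav : comp G ({c₁}ᶜ : Set (Fin n)) v = comp G ({c₁}ᶜ : Set (Fin n)) c₂
        · exfalso
          have huA : u ∈ comp G ({c₁}ᶜ : Set (Fin n)) c₂ := hau ▸ mem_comp_self hu
          have hvA : v ∈ comp G ({c₁}ᶜ : Set (Fin n)) c₂ := hav ▸ mem_comp_self hv
          exact hnr ((huA : ReachIn G _ c₂ u).symm.trans hvA)
        · exact ⟨v, mem_compl_ne hv, hav⟩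
      · exact ⟨u, mem_compl_ne hu, hau⟩
    obtain ⟨y, hyc₁, hAne⟩ := hyex
    have hfree : ∀ z ∈ comp G ({c₁}ᶜ : Set (Fin n)) y, ¬ IsCutVertex G z := by
      intro z hz hzcut
      exact hAne (hcase y hyc₁ ⟨z, hz, hzcut⟩)
    have hsp := spendant_of hG hc₁ hc₂c₁ hcut₀ huniq hyc₁ hfree
    refine ⟨B₁, comp G ({c₁}ᶜ : Set (Fin n)) y ∪ {c₁}, ?_, hB₁sp, hsp⟩
    intro heq
    have hc₁B₂ : c₁ ∈ comp G ({c₁}ᶜ : Set (Fin n)) y ∪ {c₁} := Or.inr rfl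
    rw [← heq] at hc₁B₂
    exact mem_compl_ne (comp_subset (hB₁sub hc₁B₂)) rfl
end

section
/- Let k ≥ 1, n ≥ k + 3, let u be the pendant vertex of L_{n,n−k} and let v be any non-pendant vertex of L_{n,n−k}. Then D_{L_{n,n−k}}(u) > D_{L_{n,n−k}}(v). -/
open SimpleGraph

variable {V : Type*}

section Aux

open Finset

def nd (a b : ℕ) : ℕ := (a - b) + (b - a)
def cd (g a b : ℕ) : ℕ := min (nd a b) (g - nd a b)
def fdist (g a b : ℕ) : ℕ :=
  if a < g then
    (if b < g then cd g a b else cd g a (g-1) + (b - (g-1)))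
  else
    (if b < g then cd g b (g-1) + (a - (g-1)) else nd a b)

lemma fdist_step (g n a b : ℕ) (hg : 3 ≤ g) (hgn : g ≤ n) (ha : a < n) (hb : b < n)
    (hab : a ≠ b) :
    ∃ c, c < n ∧ b ≠ c ∧
      (b+1 = c ∨ c+1 = b ∨ (b = 0 ∧ c = g-1) ∨ (c = 0 ∧ b = g-1)) ∧
      fdist g a c + 1 ≤ fdist g a b := by
  by_cases hbg : g ≤ b
  · rcases lt_or_gt_of_ne hab with h | h
    · exact ⟨b-1, by omega, by omega, by omega,
        by simp only [fdist, cd, nd]; split_ifs <;> omega⟩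
    · exact ⟨b+1, by omega, by omega, by omega,
        by simp only [fdist, cd, nd]; split_ifs <;> omega⟩
  · push_neg at hbg
    by_cases hag : g ≤ a
    · by_cases hbj : b = g-1
      · exact ⟨g, by omega, by omega, by omega,
          by simp only [fdist, cd, nd]; split_ifs <;> omega⟩
      · by_cases h1 : g-1-b ≤ b+1
        · exact ⟨b+1, by omega, by omega, by omega,
            by simp only [fdist, cd, nd]; split_ifs <;> omega⟩
        · by_cases hb0 : b = 0
          · exact ⟨g-1, by omega, by omega, by omega,
              by simp only [fdist, cd, nd]; split_ifs <;> omega⟩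
          · exact ⟨b-1, by omega, by omega, by omega,
              by simp only [fdist, cd, nd]; split_ifs <;> omega⟩
    · push_neg at hag
      by_cases hd : (a-b)+(b-a) ≤ g - ((a-b)+(b-a))
      · rcases lt_or_gt_of_ne hab with h | h
        · exact ⟨b-1, by omega, by omega, by omega,
            by simp only [fdist, cd, nd]; split_ifs <;> omega⟩
        · exact ⟨b+1, by omega, by omega, by omega,
            by simp only [fdist, cd, nd]; split_ifs <;> omega⟩
      · rcases lt_or_gt_of_ne hab with h | h
        · by_cases hbj : b = g-1
          · exact ⟨0, by omega, by omega, by omega,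
              by simp only [fdist, cd, nd]; split_ifs <;> omega⟩
          · exact ⟨b+1, by omega, by omega, by omega,
              by simp only [fdist, cd, nd]; split_ifs <;> omega⟩
        · by_cases hb0 : b = 0
          · exact ⟨g-1, by omega, by omega, by omega,
              by simp only [fdist, cd, nd]; split_ifs <;> omega⟩
          · exact ⟨b-1, by omega, by omega, by omega,
              by simp only [fdist, cd, nd]; split_ifs <;> omega⟩

lemma dist_eq_of_props {V : Type*} (G : SimpleGraph V) (F : V → V → ℕ)
    (hsym : ∀ a b, F a b = F b a) (h0 : ∀ a, F a a = 0)
    (hlip : ∀ a b c, G.Adj b c → F a c ≤ F a b + 1)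
    (hstep : ∀ a b, a ≠ b → ∃ c, G.Adj b c ∧ F a c + 1 ≤ F a b) (a b : V) :
    G.dist a b = F a b := by
  have upper : ∀ m a b, F a b ≤ m → G.Reachable a b ∧ G.dist a b ≤ F a b := by
    intro m
    induction m with
    | zero =>
      intro a b h
      rcases eq_or_ne a b with rfl | hne
      · exact ⟨Reachable.refl a, by simp [SimpleGraph.dist_self]⟩
      · obtain ⟨c, _, hlt⟩ := hstep a b hne; omega
    | succ m ih =>
      intro a b h
      rcases eq_or_ne a b with rfl | hne
      · exact ⟨Reachable.refl a, by simp [SimpleGraph.dist_self]⟩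
      · obtain ⟨c, hc, hlt⟩ := hstep a b hne
        obtain ⟨hr, hd⟩ := ih a c (by omega)
        refine ⟨hr.trans hc.symm.reachable, ?_⟩
        obtain ⟨p, hp⟩ := hr.exists_walk_length_eq_dist
        have := SimpleGraph.dist_le (p.concat hc.symm)
        rw [SimpleGraph.Walk.length_concat] at this
        omega
  have lower : ∀ (a b : V) (w : G.Walk a b), F a b ≤ w.length := by
    intro a b w
    induction w with
    | nil => simp [h0]
    | @cons u c w h p ih =>
      have h1 : F u w ≤ F c w + 1 := by
        rw [hsym u w, hsym c w]; exact hlip w c u h.symm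
      simp only [SimpleGraph.Walk.length_cons]; omega
  obtain ⟨hr, hd⟩ := upper (F a b) a b le_rfl
  refine le_antisymm hd ?_
  obtain ⟨p, hp⟩ := hr.exists_walk_length_eq_dist
  rw [← hp]; exact lower a b p

lemma lollipop_dist_s5 (n g : ℕ) (hg : 3 ≤ g) (hgn : g ≤ n) (a b : Fin n) :
    (lollipop n g).dist a b = fdist g a.val b.val := by
  refine dist_eq_of_props _ (fun a b => fdist g a.val b.val) ?_ ?_ ?_ ?_ a b
  · intro a b; simp only [fdist, cd, nd]; split_ifs <;> omega
  · intro a; simp only [fdist, cd, nd]; split_ifs <;> omega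
  · intro a b c hadj
    rw [lollipop, SimpleGraph.fromRel_adj] at hadj
    obtain ⟨hne, hrel⟩ := hadj
    have : (b:ℕ)+1 = c ∨ (c:ℕ)+1 = b ∨ ((b:ℕ) = 0 ∧ (c:ℕ) = g-1) ∨ ((c:ℕ) = 0 ∧ (b:ℕ) = g-1) := by
      tauto
    have hb := b.isLt; have hc := c.isLt
    simp only [fdist, cd, nd]; split_ifs <;> omega
  · intro a b hab
    have hvne : (a:ℕ) ≠ (b:ℕ) := fun h => hab (Fin.ext h)
    obtain ⟨c, hcn, hbc, hrel, hlt⟩ :=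
      fdist_step g n a.val b.val hg hgn a.isLt b.isLt hvne
    refine ⟨⟨c, hcn⟩, ?_, hlt⟩
    rw [lollipop, SimpleGraph.fromRel_adj]
    exact ⟨fun h => hbc (congrArg Fin.val h), by tauto⟩

lemma rot1 (g a : ℕ) (hg : 3 ≤ g) (ha : a + 1 ≤ g - 1) :
    ∑ i ∈ range g, cd g a i = ∑ i ∈ range g, cd g (a+1) i := by
  refine Finset.sum_nbij' (fun i => if i = g-1 then 0 else i+1)
    (fun j => if j = 0 then g-1 else j-1) ?_ ?_ ?_ ?_ ?_
  · intro i hi; simp only [mem_range] at *; split_ifs <;> omega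
  · intro j hj; simp only [mem_range] at *; split_ifs <;> omega
  · intro i hi; simp only [mem_range] at hi
    by_cases h : i = g-1
    · rw [if_pos h, if_pos (by omega : (0:ℕ) = 0)]; omega
    · rw [if_neg h, if_neg (by omega : ¬ i + 1 = 0)]; omega
  · intro j hj; simp only [mem_range] at hj
    by_cases h : j = 0
    · rw [if_pos h, if_pos (by omega : g - 1 = g - 1)]; omega
    · rw [if_neg h, if_neg (by omega : ¬ j - 1 = g - 1)]; omega
  · intro i hi; simp only [mem_range] at hi
    by_cases h : i = g-1
    · subst h; rw [if_pos rfl]; simp only [cd, nd]; omega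
    · rw [if_neg h]; simp only [cd, nd]; omega

lemma rot_all (g : ℕ) (hg : 3 ≤ g) :
    ∀ m a, a + m = g - 1 →
      ∑ i ∈ range g, cd g a i = ∑ i ∈ range g, cd g (g-1) i := by
  intro m
  induction m with
  | zero => intro a h; rw [show a = g-1 from by omega]
  | succ m ih =>
    intro a h
    rw [rot1 g a hg (by omega)]
    exact ih (a+1) (by omega)

lemma sum_nd (k s : ℕ) (hs : s < k) :
    ∑ t ∈ range k, nd s t = (∑ i ∈ range (s+1), i) + ∑ i ∈ range (k-s), i := by
  have h1 : ∑ t ∈ range (s+1), nd s t = ∑ i ∈ range (s+1), i := by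
    rw [← Finset.sum_range_reflect (fun i => i) (s+1)]
    apply Finset.sum_congr rfl
    intro i hi; simp only [mem_range] at hi; simp only [nd]; omega
  have h2 : ∑ t ∈ Ico (s+1) k, nd s t = ∑ i ∈ range (k-s), i := by
    rw [Finset.sum_Ico_eq_sum_range]
    have e : ∀ i ∈ range (k - (s+1)), nd s (s+1+i) = i+1 := by
      intro i hi; simp only [nd]; omega
    rw [Finset.sum_congr rfl e]
    rw [show k - s = (k - (s+1)) + 1 from by omega, Finset.sum_range_succ' (fun i => i)]
    simp
  rw [range_eq_Ico, ← Finset.sum_Ico_consecutive _ (Nat.zero_le (s+1)) (by omega : s+1 ≤ k),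
    ← range_eq_Ico, h1, h2]

lemma ts_split (k s : ℕ) (hs : s < k) :
    ∑ i ∈ range k, i = ((∑ i ∈ range (s+1), i) + (∑ i ∈ range (k-s), i)) + s*(k-s-1) := by
  obtain ⟨m, rfl⟩ : ∃ m, k = s+m+1 := ⟨k-s-1, by omega⟩
  rw [show s+m+1-s = m+1 from by omega]
  simp only [Nat.add_sub_cancel]
  have key : (∑ i ∈ range (s+m+1), i) * 2
      = (((∑ i ∈ range (s+1), i) + (∑ i ∈ range (m+1), i)) + s*m) * 2 := by
    rw [add_mul, add_mul, Finset.sum_range_id_mul_two, Finset.sum_range_id_mul_two,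
      Finset.sum_range_id_mul_two]
    simp only [Nat.add_sub_cancel]
    ring
  omega

lemma Dsum_lt (n k g : ℕ) (hk : 1 ≤ k) (hg3 : 3 ≤ g) (hn : g + k = n)
    (a : ℕ) (ha : a < n - 1) :
    ∑ i ∈ range n, fdist g a i < ∑ i ∈ range n, fdist g (n-1) i := by
  have hsplit : ∀ x, ∑ i ∈ range n, fdist g x i
      = (∑ i ∈ range g, fdist g x i) + ∑ i ∈ Ico g n, fdist g x i := by
    intro x
    rw [range_eq_Ico, ← Finset.sum_Ico_consecutive _ (Nat.zero_le g) (by omega : g ≤ n),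
      ← range_eq_Ico]
  have hp1 : ∑ i ∈ range g, fdist g (n-1) i = (∑ i ∈ range g, cd g (g-1) i) + g*k := by
    have e : ∀ i ∈ range g, fdist g (n-1) i = cd g (g-1) i + k := by
      intro i hi; simp only [mem_range] at hi
      simp only [fdist, cd, nd]; split_ifs <;> omega
    rw [Finset.sum_congr rfl e, Finset.sum_add_distrib, Finset.sum_const, card_range,
      smul_eq_mul]
  have hp2 : ∑ i ∈ Ico g n, fdist g (n-1) i = ∑ i ∈ range k, i := by
    rw [Finset.sum_Ico_eq_sum_range, show n - g = k from by omega,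
      ← Finset.sum_range_reflect (fun i => i) k]
    apply Finset.sum_congr rfl
    intro i hi; simp only [mem_range] at hi
    simp only [fdist, cd, nd]; split_ifs <;> omega
  rw [hsplit, hsplit, hp1, hp2]
  by_cases hag : a < g
  · have hc1 : ∑ i ∈ range g, fdist g a i = ∑ i ∈ range g, cd g (g-1) i := by
      have e : ∀ i ∈ range g, fdist g a i = cd g a i := by
        intro i hi; simp only [mem_range] at hi
        simp only [fdist]; rw [if_pos hag, if_pos hi]
      rw [Finset.sum_congr rfl e]
      exact rot_all g hg3 (g-1-a) a (by omega)
    have hc2 : ∑ i ∈ Ico g n, fdist g a i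
        = k * (cd g a (g-1) + 1) + ∑ i ∈ range k, i := by
      rw [Finset.sum_Ico_eq_sum_range, show n - g = k from by omega]
      have e : ∀ i ∈ range k, fdist g a (g+i) = (cd g a (g-1) + 1) + i := by
        intro i hi; simp only [mem_range] at hi
        simp only [fdist]; rw [if_pos hag, if_neg (by omega : ¬ g + i < g)]
        omega
      rw [Finset.sum_congr rfl e, Finset.sum_add_distrib, Finset.sum_const, card_range,
        smul_eq_mul]
    rw [hc1, hc2]
    have hda : cd g a (g-1) + 2 ≤ g := by simp only [cd, nd]; omega
    have : k * (cd g a (g-1) + 1) < g * k := by nlinarith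
    omega
  · push_neg at hag
    have hsk : (a - g) + 2 ≤ k := by omega
    set s := a - g with hs
    have hc1 : ∑ i ∈ range g, fdist g a i
        = (∑ i ∈ range g, cd g (g-1) i) + g*(s+1) := by
      have e : ∀ i ∈ range g, fdist g a i = cd g (g-1) i + (s+1) := by
        intro i hi; simp only [mem_range] at hi
        simp only [fdist, cd, nd]; split_ifs <;> omega
      rw [Finset.sum_congr rfl e, Finset.sum_add_distrib, Finset.sum_const, card_range,
        smul_eq_mul]
    have hc2 : ∑ i ∈ Ico g n, fdist g a i
        = (∑ i ∈ range (s+1), i) + ∑ i ∈ range (k-s), i := by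
      rw [Finset.sum_Ico_eq_sum_range, show n - g = k from by omega]
      have e : ∀ i ∈ range k, fdist g a (g+i) = nd s i := by
        intro i hi; simp only [mem_range] at hi
        simp only [fdist, cd, nd]; split_ifs <;> omega
      rw [Finset.sum_congr rfl e]
      exact sum_nd k s (by omega)
    rw [hc1, hc2]
    have hts := ts_split k s (by omega)
    have : g * (s+1) < g * k := by nlinarith
    omega

theorem auxstmt (n k : ℕ) (hk : 1 ≤ k) (hn : k + 3 ≤ n)
    (v : Fin n) (hv : v ≠ ⟨n - 1, Nat.sub_one_lt (by omega)⟩) :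
    (∑ u : Fin n, (lollipop n (n-k)).dist v u) <
      ∑ u : Fin n, (lollipop n (n-k)).dist ⟨n - 1, Nat.sub_one_lt (by omega)⟩ u := by
  set g := n - k with hgdef
  have hg3 : 3 ≤ g := by omega
  have hgn : g ≤ n := by omega
  have hD : ∀ a : Fin n, ∑ u : Fin n, (lollipop n g).dist a u
      = ∑ i ∈ range n, fdist g a.val i := by
    intro a
    rw [← Fin.sum_univ_eq_sum_range (fun i => fdist g a.val i) n]
    exact Finset.sum_congr rfl (fun u _ => lollipop_dist_s5 n g hg3 hgn a u)
  rw [hD, hD]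
  have hval : v.val < n - 1 := by
    have := v.isLt
    have : v.val ≠ n - 1 := fun h => hv (Fin.ext h)
    omega
  exact Dsum_lt n k g hk hg3 (by omega) v.val hval

end Aux

/-- In `L_{n,n-k}` (with `k ≥ 1`, `n ≥ k+3`), the pendant vertex `n-1` has
strictly larger distance than every non-pendant vertex. -/
theorem stmt5 (n k : ℕ) (hk : 1 ≤ k) (hn : k + 3 ≤ n)
    (v : Fin n) (hv : v ≠ ⟨n - 1, by omega⟩) :
    vertexDistance (lollipop n (n - k)) v <
      vertexDistance (lollipop n (n - k)) ⟨n - 1, by omega⟩ := by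
  unfold vertexDistance
  exact auxstmt n k hk hn v hv
end

section
/- Let G be a connected graph on n ≥ 5 vertices with exactly k ≥ 1 cut vertices, let B be a pendant block of G with |V(B)| = m ≥ 4 containing the cut vertex w, and let G' be the graph obtained from G by replacing B by the cycle C_m in such a way that w remains a cut vertex of G' lying on C_m. Then for every vertex v of G there exists a vertex v' of G' with D_{G'}(v') ≥ D_G(v); in particular, if v ∈ (V(G) \ V(B)) ∪ {w}, then D_{G'}(v) ≥ D_G(v). -/
open SimpleGraph

variable {V : Type*}

section Helpers
variable {V : Type*}

def inducedHom (G : SimpleGraph V) (S : Set V) : G.induce S →g G :=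
  ⟨Subtype.val, fun h => h⟩

lemma induce_adj_of {G : SimpleGraph V} {S : Set V} {a b : V} (ha : a ∈ S) (hb : b ∈ S)
    (h : G.Adj a b) : (G.induce S).Adj ⟨a, ha⟩ ⟨b, hb⟩ := h

lemma walk_in_induce {G : SimpleGraph V} {S : Set V} :
    ∀ {a b : V} (p : G.Walk a b) (_ : ∀ s ∈ p.support, s ∈ S)
    (ha : a ∈ S) (hb : b ∈ S),
    ∃ q : (G.induce S).Walk ⟨a, ha⟩ ⟨b, hb⟩, q.length = p.length := by
  intro a b p
  induction p with
  | nil => intro _ ha hb; exact ⟨Walk.nil, rfl⟩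
  | @cons u x b h p ih =>
    intro hs ha hb
    have hx : x ∈ S := hs x (by simp [Walk.support_cons])
    obtain ⟨q, hq⟩ := ih (fun s hsup => hs s (by simp [Walk.support_cons, hsup])) hx hb
    exact ⟨Walk.cons (induce_adj_of ha hx h) q, by simp [hq]⟩

lemma reachable_in_induce {G : SimpleGraph V} {S : Set V} {a b : V} (p : G.Walk a b)
    (hs : ∀ s ∈ p.support, s ∈ S) (ha : a ∈ S) (hb : b ∈ S) :
    (G.induce S).Reachable ⟨a, ha⟩ ⟨b, hb⟩ := by
  obtain ⟨q, _⟩ := walk_in_induce p hs ha hb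
  exact ⟨q⟩

lemma dist_le_induce {G : SimpleGraph V} {S : Set V} {a b : V} (ha : a ∈ S) (hb : b ∈ S)
    (hr : (G.induce S).Reachable ⟨a, ha⟩ ⟨b, hb⟩) :
    G.dist a b ≤ (G.induce S).dist ⟨a, ha⟩ ⟨b, hb⟩ := by
  obtain ⟨q, hq⟩ := hr.exists_walk_length_eq_dist
  calc G.dist a b ≤ (q.map (inducedHom G S)).length := dist_le _
    _ = _ := by rw [Walk.length_map, hq]

lemma reachable_induce_mono {G : SimpleGraph V} {S T : Set V} (hST : S ⊆ T) {a b : V}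
    (ha : a ∈ S) (hb : b ∈ S) (h : (G.induce S).Reachable ⟨a, ha⟩ ⟨b, hb⟩) :
    (G.induce T).Reachable ⟨a, hST ha⟩ ⟨b, hST hb⟩ :=
  h.map (SimpleGraph.induceHomOfLE G hST).toHom

lemma induce_connected_of_hub {G : SimpleGraph V} {S : Set V} {h0 : V} (hh : h0 ∈ S)
    (hr : ∀ a, ∀ ha : a ∈ S, (G.induce S).Reachable ⟨a, ha⟩ ⟨h0, hh⟩) :
    (G.induce S).Connected := by
  rw [connected_iff]
  exact ⟨fun a b => (hr a.1 a.2).trans (hr b.1 b.2).symm, ⟨⟨h0, hh⟩⟩⟩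

def induceInduceIso (G : SimpleGraph V) (S : Set V) (r : S) :
    ((G.induce S).induce ({r}ᶜ : Set S)) ≃g G.induce (S \ {(r : V)}) where
  toFun := fun a => ⟨a.1.1, a.1.2, fun hc => a.2 (Subtype.ext hc)⟩
  invFun := fun a => ⟨⟨a.1, a.2.1⟩, fun hc => a.2.2 (congrArg Subtype.val hc)⟩
  left_inv := fun _ => rfl
  right_inv := fun _ => rfl
  map_rel_iff' := Iff.rfl

lemma iso_connected {W X : Type*} {H : SimpleGraph W} {K : SimpleGraph X} (e : H ≃g K)
    (h : H.Connected) : K.Connected := by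
  rw [connected_iff] at h ⊢
  refine ⟨fun a b => ?_, ⟨e h.2.some⟩⟩
  have := (h.1 (e.symm a) (e.symm b)).map e.toHom
  simpa using this

lemma iso_dist {W X : Type*} {H : SimpleGraph W} {K : SimpleGraph X} (e : H ≃g K)
    (a b : W) : K.dist (e a) (e b) = H.dist a b := by
  apply le_antisymm
  · by_cases hr : H.Reachable a b
    · obtain ⟨p, hp⟩ := hr.exists_walk_length_eq_dist
      calc K.dist (e a) (e b) ≤ (p.map e.toHom).length := dist_le _
        _ = H.dist a b := by rw [Walk.length_map, hp]
    · have h2 : ¬ K.Reachable (e a) (e b) := by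
        intro hk
        have := hk.map e.symm.toHom
        simp at this
        exact hr this
      simp [dist_eq_zero_of_not_reachable h2, dist_eq_zero_of_not_reachable hr]
  · by_cases hr : K.Reachable (e a) (e b)
    · obtain ⟨p, hp⟩ := hr.exists_walk_length_eq_dist
      have := dist_le (p.map e.symm.toHom)
      simp only [Walk.length_map, hp] at this
      simpa using this
    · have h2 : ¬ H.Reachable a b := fun hk => hr (by simpa using hk.map e.toHom)
      simp [dist_eq_zero_of_not_reachable h2]

/-- Walk shortening across a one-vertex boundary. -/
lemma shorten_walk {G : SimpleGraph V} {S : Set V} {w : V} (hwS : w ∈ S)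
    (bc : ∀ a b : V, G.Adj a b → a ∈ S → b ∉ S → a = w)
    {a v : V} (p : G.Walk a v) (hv : v ∈ S) :
      (∀ ha : a ∈ S, ∃ q : (G.induce S).Walk ⟨a, ha⟩ ⟨v, hv⟩, q.length ≤ p.length) ∧
      (a ∉ S → ∃ q : (G.induce S).Walk ⟨w, hwS⟩ ⟨v, hv⟩, q.length ≤ p.length) := by
  induction p with
  | nil =>
    refine ⟨fun ha => ⟨Walk.nil.copy rfl (by congr), by simp⟩, fun ha => absurd hv ha⟩
  | @cons u x b h p ih =>
    constructor
    · intro ha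
      by_cases hx : x ∈ S
      · obtain ⟨q, hq⟩ := (ih hv).1 hx
        exact ⟨Walk.cons (induce_adj_of ha hx h) q, by simpa using Nat.add_le_add_right hq 1⟩
      · have huw : u = w := bc u x h ha hx
        obtain ⟨q, hq⟩ := (ih hv).2 hx
        subst huw
        exact ⟨q, le_trans hq (by simp)⟩
    · intro ha
      by_cases hx : x ∈ S
      · have hxw : x = w := bc x u h.symm hx ha
        obtain ⟨q, hq⟩ := (ih hv).1 hx
        subst hxw
        exact ⟨q, le_trans hq (by simp)⟩
      · obtain ⟨q, hq⟩ := (ih hv).2 hx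
        exact ⟨q, le_trans hq (by simp)⟩

/-- Cross lemma: a walk from outside `S` into `S` pays for `a → w` plus `w → v` inside. -/
lemma cross_walk {G : SimpleGraph V} {S : Set V} {w : V} (hwS : w ∈ S)
    (bc : ∀ a b : V, G.Adj a b → a ∈ S → b ∉ S → a = w) :
    ∀ {a v : V} (p : G.Walk a v), a ∉ S → ∀ hv : v ∈ S,
      ∃ (q : G.Walk a w) (r : (G.induce S).Walk ⟨w, hwS⟩ ⟨v, hv⟩),
        q.length + r.length ≤ p.length := by
  intro a v p
  induction p with
  | nil => intro ha hv; exact absurd hv ha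
  | @cons u x b h p ih =>
    intro ha hv
    by_cases hx : x ∈ S
    · have hxw : x = w := bc x u h.symm hx ha
      subst hxw
      obtain ⟨r, hr⟩ := (shorten_walk hwS bc p hv).1 hwS
      exact ⟨Walk.cons h Walk.nil, r, by simp only [Walk.length_cons, Walk.length_nil]; omega⟩
    · obtain ⟨q, r, hqr⟩ := ih hx hv
      exact ⟨Walk.cons h q, r, by simp only [Walk.length_cons]; omega⟩

lemma dist_adj_le {H : SimpleGraph V} {v u x : V} (h : H.Adj u x) :
    H.dist v x ≤ H.dist v u + 1 := by
  by_cases hr : H.Reachable v u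
  · obtain ⟨q, hq⟩ := hr.exists_walk_length_eq_dist
    calc H.dist v x ≤ (q.concat h).length := dist_le _
      _ = H.dist v u + 1 := by rw [Walk.length_concat, hq]
  · have h2 : ¬ H.Reachable v x := fun hx => hr (hx.trans ⟨Walk.cons h.symm Walk.nil⟩)
    simp [dist_eq_zero_of_not_reachable h2]

end Helpers

section LevelBound
variable {W : Type*}
/-- monotone level crossing -/
lemma walk_level {H : SimpleGraph W} (v : W) (i : ℕ) :
    ∀ {a c : W} (p : H.Walk a c), (∀ s ∈ p.support, H.dist v s ≠ i) →
      H.dist v a < i → H.dist v c < i := by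
  intro a c p
  induction p with
  | nil => exact fun _ h => h
  | @cons u x b h p ih =>
    intro hs ha
    have hx : H.dist v x < i := by
      have h1 : H.dist v x ≤ H.dist v u + 1 := dist_adj_le h
      have h2 : H.dist v x ≠ i := hs x (by simp [Walk.support_cons])
      omega
    exact ih (fun s hsup => hs s (by simp [Walk.support_cons, hsup])) hx

/-- every distance value below an attained one is attained -/
lemma dist_level_attained {H : SimpleGraph W} (hH : H.Connected) (v : W) :
    ∀ (i j : ℕ), i ≤ j → (∃ u, H.dist v u = j) → ∃ u, H.dist v u = i := by
  intro i j hij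
  induction j with
  | zero => intro h; exact (Nat.le_zero.mp hij) ▸ h
  | succ j ih =>
    intro ⟨u, hu⟩
    rcases Nat.eq_or_lt_of_le hij with h | h
    · exact h ▸ ⟨u, hu⟩
    · apply ih (by omega)
      obtain ⟨p, hp⟩ := (hH v u).exists_walk_length_eq_dist
      have hne : v ≠ u := by
        intro h'; rw [h', dist_self] at hu; omega
      obtain ⟨x, h', q, hpc⟩ := p.exists_eq_cons_of_ne hne
      obtain ⟨y, r, hadj, hcq⟩ := Walk.exists_cons_eq_concat h' q
      refine ⟨y, le_antisymm ?_ ?_⟩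
      · calc H.dist v y ≤ (r).length := dist_le _
          _ = j := by
            have hl : (r.concat hadj).length = j + 1 := by
              rw [← hcq, ← hpc, hp, hu]
            rw [Walk.length_concat] at hl; omega
      · have h1 : H.dist v u ≤ H.dist v y + 1 := dist_adj_le hadj
        omega


lemma gauss_Ico : ∀ e : ℕ, 2 * (∑ i ∈ Finset.Ico 1 e, (e - i)) = e * (e - 1) := by
  intro e
  induction e with
  | zero => simp
  | succ e ih =>
    rcases Nat.eq_zero_or_pos e with h0 | h1
    · subst h0; simp
    · rw [Finset.sum_Ico_succ_top (by omega)]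
      have hstep : ∑ i ∈ Finset.Ico 1 e, (e + 1 - i)
          = (∑ i ∈ Finset.Ico 1 e, (e - i)) + (e - 1) := by
        rw [Finset.sum_congr rfl (fun i hi => by
          have := Finset.mem_Ico.mp hi
          show e + 1 - i = (e - i) + 1
          omega), Finset.sum_add_distrib, Finset.sum_const, Nat.card_Ico, smul_eq_mul,
          mul_one]
      rw [hstep]
      have hkey : e * (e - 1) + 2 * e = (e + 1) * (e + 1 - 1) := by
        obtain ⟨f, rfl⟩ : ∃ f, e = f + 1 := ⟨e - 1, by omega⟩
        simp only [Nat.add_sub_cancel]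
        ring
      have h1e : e + 1 - e = 1 := by omega
      have hE : e - 1 + 1 = e := by omega
      rw [h1e]
      linarith

lemma level_bound [Fintype W] {H : SimpleGraph W} (hH : H.Connected)
    (hnc : ∀ v : W, (H.induce ({v}ᶜ : Set W)).Connected) (v : W) :
    (∀ u : W, 2 * H.dist v u ≤ Fintype.card W) ∧
    4 * (∑ u : W, H.dist v u) ≤ Fintype.card W ^ 2 := by
  classical
  set m := Fintype.card W with hm
  set e := Finset.univ.sup (fun u => H.dist v u) with he
  have hdist_le : ∀ u, H.dist v u ≤ e := fun u => Finset.le_sup (Finset.mem_univ u)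
  set nn : ℕ → ℕ := fun i => (Finset.univ.filter (fun u => H.dist v u = i)).card with hnn
  have htot : ∑ i ∈ Finset.range (e+1), nn i = m := by
    rw [hm, ← Finset.card_univ]
    exact (Finset.card_eq_sum_card_fiberwise
      (fun u _ => Finset.mem_range.mpr (Nat.lt_succ_of_le (hdist_le u)))).symm
  have hsum : ∑ u : W, H.dist v u = ∑ i ∈ Finset.range (e+1), i * nn i := by
    have h1 := Finset.sum_fiberwise_eq_sum_filter Finset.univ (Finset.range (e+1))
      (fun u => H.dist v u) (fun u => H.dist v u)
    rw [Finset.filter_true_of_mem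
      (fun u _ => Finset.mem_range.mpr (Nat.lt_succ_of_le (hdist_le u)))] at h1
    rw [← h1]
    refine Finset.sum_congr rfl fun i _ => ?_
    rw [Finset.sum_congr rfl (fun u hu => (Finset.mem_filter.mp hu).2), Finset.sum_const,
      smul_eq_mul, mul_comm]
  obtain ⟨z, hz⟩ : ∃ z, H.dist v z = e := by
    obtain ⟨z, hz⟩ := Finset.exists_mem_eq_sup Finset.univ ⟨v, Finset.mem_univ v⟩
      (fun u => H.dist v u)
    exact ⟨z, hz.2.symm⟩
  have npos : ∀ i, i ≤ e → 1 ≤ nn i := by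
    intro i hi
    obtain ⟨u, hu⟩ := dist_level_attained hH v i e hi ⟨z, hz⟩
    exact Finset.card_pos.mpr ⟨u, by simp [hnn, hu]⟩
  have ntwo : ∀ i, 0 < i → i < e → 2 ≤ nn i := by
    intro i hi0 hie
    by_contra hlt
    have h1 : nn i = 1 := by have := npos i (le_of_lt hie); omega
    obtain ⟨u₀, hu₀⟩ := Finset.card_eq_one.mp h1
    have honly : ∀ u : W, H.dist v u = i → u = u₀ := by
      intro u hu
      have hmem : u ∈ Finset.univ.filter (fun u => H.dist v u = i) := by simp [hu]
      rw [hu₀] at hmem; simpa using hmem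
    have hdu₀ : H.dist v u₀ = i := by
      have hmem : u₀ ∈ Finset.univ.filter (fun u => H.dist v u = i) := by
        rw [hu₀]; simp
      simpa using hmem
    have hvne : v ≠ u₀ := fun h => by rw [← h, dist_self] at hdu₀; omega
    have hzne : z ≠ u₀ := fun h => by rw [h, hdu₀] at hz; omega
    obtain ⟨q⟩ := (hnc u₀) ⟨v, hvne⟩ ⟨z, hzne⟩
    have hs : ∀ s ∈ (q.map (inducedHom H ({u₀}ᶜ : Set W))).support, H.dist v s ≠ i := by
      intro s hsup hdist
      rw [Walk.support_map, List.mem_map] at hsup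
      obtain ⟨⟨s', hs'⟩, _, rfl⟩ := hsup
      exact hs' (honly _ hdist)
    have h0 : H.dist v ((inducedHom H ({u₀}ᶜ : Set W)) ⟨v, hvne⟩) < i := by
      show H.dist v v < i
      rw [dist_self]; omega
    have hfin := walk_level v i (q.map (inducedHom H ({u₀}ᶜ : Set W))) hs h0
    have hz' : (inducedHom H ({u₀}ᶜ : Set W)) ⟨z, hzne⟩ = z := rfl
    rw [hz'] at hfin
    omega
  set A := ∑ i ∈ Finset.range (e+1), i * nn i with hA
  set C := ∑ i ∈ Finset.range (e+1), (e - i) * nn i with hC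
  have hAC : A + C = e * m := by
    rw [hA, hC, ← Finset.sum_add_distrib, ← htot, Finset.mul_sum]
    refine Finset.sum_congr rfl fun i hi => ?_
    have hie : i ≤ e := by have := Finset.mem_range.mp hi; omega
    rw [← add_mul, Nat.add_sub_cancel' hie]
  have hsplit : (1:ℕ) ≤ e → Finset.range (e+1) = insert 0 (insert e (Finset.Ico 1 e)) := by
    intro h1
    ext j
    simp only [Finset.mem_range, Finset.mem_insert, Finset.mem_Ico]
    omega
  have h2e : 2 * e ≤ m := by
    rcases Nat.eq_zero_or_pos e with h0 | h1
    · omega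
    · rw [← htot, hsplit h1, Finset.sum_insert (by simp; omega),
        Finset.sum_insert (by simp)]
      have hIco : 2 * (e - 1) ≤ ∑ i ∈ Finset.Ico 1 e, nn i := by
        calc 2 * (e-1) = ∑ _i ∈ Finset.Ico 1 e, 2 := by
              rw [Finset.sum_const, Nat.card_Ico, smul_eq_mul]; ring
          _ ≤ _ := Finset.sum_le_sum (fun i hi => by
              have := Finset.mem_Ico.mp hi
              exact ntwo i (by omega) (by omega))
      have h00 := npos 0 (by omega)
      have hee := npos e le_rfl
      omega
  have hCe : e * e ≤ C := by
    rcases Nat.eq_zero_or_pos e with h0 | h1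
    · simp [h0]
    · rw [hC, hsplit h1, Finset.sum_insert (by simp; omega), Finset.sum_insert (by simp)]
      have hIco : e * (e - 1) ≤ ∑ i ∈ Finset.Ico 1 e, (e - i) * nn i := by
        calc e * (e-1) = 2 * ∑ i ∈ Finset.Ico 1 e, (e - i) := (gauss_Ico e).symm
          _ = ∑ i ∈ Finset.Ico 1 e, (e - i) * 2 := by
              rw [Finset.mul_sum]; exact Finset.sum_congr rfl fun i _ => mul_comm _ _
          _ ≤ _ := Finset.sum_le_sum (fun i hi => by
              have := Finset.mem_Ico.mp hi
              exact Nat.mul_le_mul_left _ (ntwo i (by omega) (by omega)))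
      have h00 := npos 0 (by omega)
      have heterm : e ≤ e * nn 0 := Nat.le_mul_of_pos_right e h00
      have hmm : e + e * (e - 1) = e * e := by
        obtain ⟨f, hf⟩ : ∃ f, e = f + 1 := ⟨e - 1, by omega⟩
        rw [hf]
        simp only [Nat.add_sub_cancel]
        ring
      simp only [Nat.sub_zero, Nat.sub_self, zero_mul, zero_add]
      linarith
  constructor
  · intro u
    have := hdist_le u
    omega
  · rw [hsum]
    obtain ⟨d, hd⟩ : ∃ d, m = 2*e + d := ⟨m - 2*e, by omega⟩
    have h4 : 4*(e*m) ≤ m^2 + 4*(e*e) := by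
      rw [hd]
      nlinarith [sq_nonneg d]
    linarith

end LevelBound

section cycle
variable {m : ℕ}

/-- circular distance function on `ZMod m` -/
def dm (m : ℕ) (x : ZMod m) : ℕ := min (ZMod.val x) (m - ZMod.val x)

lemma dm_zero (hm : 0 < m) : dm m 0 = 0 := by
  haveI : NeZero m := ⟨by omega⟩
  simp [dm, ZMod.val_zero]

lemma dm_neg (hm : 0 < m) (x : ZMod m) : dm m (-x) = dm m x := by
  haveI : NeZero m := ⟨by omega⟩
  rw [dm, dm, ZMod.neg_val]
  split_ifs with h
  · simp [h, ZMod.val_zero]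
  · have := ZMod.val_lt x
    have hne : x.val ≠ 0 := fun hc => h ((ZMod.val_eq_zero x).mp hc)
    omega

lemma dm_add_one (hm : 2 ≤ m) (x : ZMod m) : dm m (x + 1) ≤ dm m x + 1 := by
  haveI : NeZero m := ⟨by omega⟩
  haveI : Fact (1 < m) := ⟨by omega⟩
  have hv := ZMod.val_lt x
  have h1 : (1 : ZMod m).val = 1 := ZMod.val_one m
  rw [dm, dm, ZMod.val_add, h1]
  rcases Nat.lt_or_ge (x.val + 1) m with h | h
  · rw [Nat.mod_eq_of_lt h]; omega
  · have : x.val + 1 = m := by omega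
    rw [this, Nat.mod_self]; omega

lemma dm_step (hm : 2 ≤ m) (x e : ZMod m) (he : e = 1 ∨ e = -1) :
    dm m (x + e) ≤ dm m x + 1 := by
  rcases he with rfl | rfl
  · exact dm_add_one hm x
  · calc dm m (x + -1) = dm m (-x + 1) := by
          rw [← dm_neg (by omega : 0 < m) (x + -1)]
          congr 1
          ring
      _ ≤ dm m (-x) + 1 := dm_add_one hm _
      _ = dm m x + 1 := by rw [dm_neg (by omega : 0 < m)]
end cycle

section cycle2
variable {m : ℕ}

def fz (m : ℕ) : Fin m → ZMod m := fun i => ((i : ℕ) : ZMod m)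

lemma fz_injective (hm : 0 < m) : Function.Injective (fz m) := by
  haveI : NeZero m := ⟨by omega⟩
  intro a b hab
  have ha := ZMod.val_cast_of_lt a.isLt
  have hb := ZMod.val_cast_of_lt b.isLt
  apply Fin.ext
  calc (a : ℕ) = (fz m a).val := ha.symm
    _ = (fz m b).val := by rw [hab]
    _ = (b : ℕ) := hb

lemma cycle_adj_step (hm : 3 ≤ m) {a b : Fin m} (h : (cycleG m).Adj a b) :
    fz m b - fz m a = 1 ∨ fz m b - fz m a = -1 := by
  rw [cycleG, lollipop, fromRel_adj] at h
  have hcast : ((m - 1 : ℕ) : ZMod m) = -1 := by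
    have h1 : (1:ℕ) ≤ m := by omega
    push_cast [Nat.cast_sub h1]
    simp [ZMod.natCast_self]
  rcases h.2 with (h1 | h2) | (h3 | h4)
  · left
    rw [fz, fz, ← h1]
    push_cast
    ring
  · right
    rw [fz, fz, h2.1, h2.2, hcast]
    simp
  · right
    rw [fz, fz, ← h3]
    push_cast
    ring
  · left
    rw [fz, fz, h4.1, h4.2, hcast]
    simp

lemma cycle_walk_bound (hm : 3 ≤ m) : ∀ {a b : Fin m} (p : (cycleG m).Walk a b),
    dm m (fz m b - fz m a) ≤ p.length := by
  intro a b p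
  induction p with
  | nil => simp [sub_self, dm_zero (by omega : 0 < m)]
  | @cons u x b h p ih =>
    have hstep := cycle_adj_step hm h
    have key : dm m ((fz m b - fz m x) + (fz m x - fz m u)) ≤ dm m (fz m b - fz m x) + 1 :=
      dm_step (by omega) _ _ hstep
    have heq : (fz m b - fz m x) + (fz m x - fz m u) = fz m b - fz m u := by ring
    rw [heq] at key
    rw [Walk.length_cons]
    omega

lemma cycle_connected (hm : 3 ≤ m) : (cycleG m).Connected := by
  have h0 : ∀ j : ℕ, ∀ hj : j < m, (cycleG m).Reachable ⟨0, by omega⟩ ⟨j, hj⟩ := by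
    intro j
    induction j with
    | zero => intro hj; exact Reachable.refl _
    | succ j ih =>
      intro hj
      have hadj : (cycleG m).Adj ⟨j, by omega⟩ ⟨j+1, hj⟩ := by
        rw [cycleG, lollipop, fromRel_adj]
        exact ⟨by simp [Fin.ext_iff], Or.inl (Or.inl rfl)⟩
      exact (ih (by omega)).trans hadj.reachable
  rw [connected_iff]
  refine ⟨fun a b => ?_, ⟨⟨0, by omega⟩⟩⟩
  have ha := h0 a.val a.isLt
  have hb := h0 b.val b.isLt
  simp only [Fin.eta] at ha hb
  exact ha.symm.trans hb

lemma cycle_dist_lb (hm : 3 ≤ m) (a b : Fin m) :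
    dm m (fz m b - fz m a) ≤ (cycleG m).dist a b := by
  obtain ⟨p, hp⟩ := ((cycle_connected hm) a b).exists_walk_length_eq_dist
  rw [← hp]
  exact cycle_walk_bound hm p

lemma gauss_rev (c : ℕ) : 2 * (∑ j ∈ Finset.range c, (c - j)) = c * (c + 1) := by
  have href := Finset.sum_range_reflect (fun j => j + 1) c
  have hco : ∀ j ∈ Finset.range c, c - 1 - j + 1 = c - j := fun j hj => by
    have := Finset.mem_range.mp hj; omega
  rw [Finset.sum_congr rfl hco] at href
  rw [href, Finset.sum_add_distrib, Finset.sum_const, Finset.card_range, smul_eq_mul, mul_one,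
    Nat.mul_add, Nat.mul_add]
  have := Finset.sum_range_id_mul_two c
  rcases Nat.eq_zero_or_pos c with h0 | h1
  · simp [h0]
  · obtain ⟨f, hf⟩ : ∃ f, c = f + 1 := ⟨c - 1, by omega⟩
    rw [mul_comm (∑ i ∈ Finset.range c, i) 2] at this
    rw [this, hf]
    simp only [Nat.add_sub_cancel]
    ring

lemma min_sum_lb (hm : 3 ≤ m) : m ^ 2 / 4 ≤ ∑ k ∈ Finset.range m, min k (m - k) := by
  set h := m / 2 with hh
  have hsplit : Finset.range m = Finset.range (h+1) ∪ Finset.Ico (h+1) m := by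
    rw [Finset.range_eq_Ico, Finset.range_eq_Ico]
    exact (Finset.Ico_union_Ico_eq_Ico (a := 0) (b := h+1) (c := m) (by omega) (by omega)).symm
  have hdisj : Disjoint (Finset.range (h+1)) (Finset.Ico (h+1) m) := by
    rw [Finset.range_eq_Ico]
    exact Finset.Ico_disjoint_Ico_consecutive 0 (h+1) m
  rw [hsplit, Finset.sum_union hdisj]
  have hL : ∑ k ∈ Finset.range (h+1), min k (m - k) = ∑ k ∈ Finset.range (h+1), k :=
    Finset.sum_congr rfl fun k hk => by
      have := Finset.mem_range.mp hk; omega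
  have hR : ∑ k ∈ Finset.Ico (h+1) m, min k (m - k) = ∑ k ∈ Finset.Ico (h+1) m, (m - k) :=
    Finset.sum_congr rfl fun k hk => by
      have := Finset.mem_Ico.mp hk; omega
  have hR2 : ∑ k ∈ Finset.Ico (h+1) m, (m - k)
      = ∑ j ∈ Finset.range (m - (h+1)), ((m - h - 1) - j) := by
    rw [Finset.sum_Ico_eq_sum_range]
    exact Finset.sum_congr rfl fun j hj => by
      have := Finset.mem_range.mp hj; omega
  have hR3 : m - (h+1) = m - h - 1 := by omega
  rw [hR3] at hR2
  have g1 := Finset.sum_range_id_mul_two (h+1)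
  simp only [Nat.add_sub_cancel] at g1
  have g2 := gauss_rev (m - h - 1)
  rw [hL, hR, hR2]
  set S1 := ∑ k ∈ Finset.range (h+1), k
  set S2 := ∑ j ∈ Finset.range (m - h - 1), ((m - h - 1) - j)
  -- 2*S1 = (h+1)*h, 2*S2 = (m-h-1)*(m-h)
  rcases Nat.even_or_odd m with ⟨q, hq⟩ | ⟨q, hq⟩
  · have hhq : h = q := by omega
    have hc : m - h - 1 = q - 1 := by omega
    have hq1 : 1 ≤ q := by omega
    obtain ⟨r, hr⟩ : ∃ r, q = r + 1 := ⟨q - 1, by omega⟩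
    rw [hhq, hr] at g1
    have hc2 : m - h - 1 = r := by omega
    rw [hc2] at g2
    have hm2 : m = 2 * r + 2 := by omega
    have : m ^ 2 ≤ 4 * (S1 + S2) := by nlinarith
    omega
  · have hhq : h = q := by omega
    have hc : m - h - 1 = q := by omega
    rw [hhq] at g1
    rw [hc] at g2
    have hm2 : m = 2 * q + 1 := by omega
    have : m ^ 2 ≤ 4 * (S1 + S2) + 1 := by nlinarith
    omega

lemma cycle_sum_lb (hm : 3 ≤ m) (a : Fin m) :
    m ^ 2 / 4 ≤ ∑ u : Fin m, (cycleG m).dist a u := by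
  haveI : NeZero m := ⟨by omega⟩
  have hcard : Fintype.card (Fin m) = Fintype.card (ZMod m) := by
    rw [Fintype.card_fin, ZMod.card]
  have hbij1 : Function.Bijective (fun u : Fin m => fz m u - fz m a) := by
    rw [Fintype.bijective_iff_injective_and_card]
    refine ⟨fun u v huv => fz_injective (by omega : 0 < m) (by
      have h2 : fz m u - fz m a = fz m v - fz m a := huv
      have h3 := congrArg (fun z => z + fz m a) h2
      simpa using h3), hcard⟩
  have hbij2 : Function.Bijective (fz m) := by
    rw [Fintype.bijective_iff_injective_and_card]
    exact ⟨fz_injective (by omega), hcard⟩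
  calc m ^ 2 / 4 ≤ ∑ k ∈ Finset.range m, min k (m - k) := min_sum_lb hm
    _ = ∑ u : Fin m, min (u : ℕ) (m - (u : ℕ)) := (Fin.sum_univ_eq_sum_range _ m).symm
    _ = ∑ u : Fin m, dm m (fz m u) := by
        refine Finset.sum_congr rfl fun u _ => ?_
        rw [dm, fz, ZMod.val_cast_of_lt u.isLt]
    _ = ∑ x : ZMod m, dm m x := hbij2.sum_comp _
    _ = ∑ u : Fin m, dm m (fz m u - fz m a) := (hbij1.sum_comp _).symm
    _ ≤ ∑ u : Fin m, (cycleG m).dist a u :=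
        Finset.sum_le_sum fun u _ => cycle_dist_lb hm a u

lemma cycle_ecc (hm : 3 ≤ m) (a : Fin m) : ∃ b, m / 2 ≤ (cycleG m).dist a b := by
  haveI : NeZero m := ⟨by omega⟩
  refine ⟨⟨(a.val + m/2) % m, Nat.mod_lt _ (by omega)⟩, ?_⟩
  have hfz : fz m ⟨(a.val + m/2) % m, Nat.mod_lt _ (by omega)⟩ - fz m a = ((m/2 : ℕ) : ZMod m) := by
    rw [fz, fz]
    show (((a.val + m/2) % m : ℕ) : ZMod m) - ((a.val : ℕ) : ZMod m) = _
    rw [ZMod.natCast_mod]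
    push_cast
    ring
  have hdm : dm m ((m/2 : ℕ) : ZMod m) = m / 2 := by
    rw [dm, ZMod.val_cast_of_lt (by omega : m/2 < m)]
    omega
  calc m / 2 = dm m (fz m ⟨(a.val + m/2) % m, Nat.mod_lt _ (by omega)⟩ - fz m a) := by
        rw [hfz, hdm]
    _ ≤ _ := cycle_dist_lb hm a _

end cycle2

section Block
variable {V : Type*}
/-- first hit of a target set along a walk, as a path touching the target only at its end -/
lemma first_hit [DecidableEq V] {H : SimpleGraph V} (T : Set V) :
    ∀ {a c : V} (p : H.Walk a c), a ∉ T → c ∈ T →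
    ∃ (b : V) (_ : b ∈ T) (q : H.Walk a b), q.IsPath ∧
      (∀ s ∈ q.support, s ∈ T → s = b) := by
  intro a c p
  induction p with
  | nil => intro ha hc; exact absurd hc ha
  | @cons u x c h p ih =>
    intro ha hc
    by_cases hx : x ∈ T
    · refine ⟨x, hx, Walk.cons h Walk.nil, ?_, ?_⟩
      · rw [Walk.cons_isPath_iff]
        exact ⟨Walk.IsPath.nil, by simp [h.ne]⟩
      · intro s hsup hsT
        simp only [Walk.support_cons, Walk.support_nil, List.mem_cons,
          List.mem_singleton, List.not_mem_nil, or_false] at hsup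
        rcases hsup with rfl | rfl
        · exact absurd hsT ha
        · rfl
    · obtain ⟨b, hbT, q, hqp, hqT⟩ := ih hx hc
      refine ⟨b, hbT, (Walk.cons h q).toPath, (Walk.cons h q).toPath.2, ?_⟩
      intro s hsup hsT
      have hsub := Walk.support_toPath_subset (Walk.cons h q)
      have hs2 := hsub hsup
      rw [Walk.support_cons, List.mem_cons] at hs2
      rcases hs2 with rfl | hs3
      · exact absurd hsT ha
      · exact hqT s hs3 hsT

lemma not_mem_dropUntil_support_of_isPath [DecidableEq V] {H : SimpleGraph V} {a c : V}
    (p : H.Walk a c) (hp : p.IsPath) {s : V} (hs : s ∈ p.support) (hne : s ≠ a) :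
    a ∉ (p.dropUntil s hs).support := by
  intro hmem
  have hspec := p.take_spec hs
  have hnd : p.support.Nodup := hp.support_nodup
  rw [← hspec, Walk.support_append] at hnd
  have h1 : a ∈ (p.takeUntil s hs).support := Walk.start_mem_support _
  have h2 : a ∈ (p.dropUntil s hs).support.tail := by
    have hcons := Walk.support_eq_cons (p.dropUntil s hs)
    rw [hcons] at hmem
    rcases List.mem_cons.mp hmem with rfl | h2
    · exact absurd rfl hne
    · exact h2
  exact (List.disjoint_of_nodup_append hnd) h1 h2

lemma mem_diff_singleton {a r : V} {C : Set V} (h1 : a ∈ C) (h2 : a ≠ r) : a ∈ C \ {r} :=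
  ⟨h1, h2⟩

lemma block_boundary_aux [DecidableEq V] {G : SimpleGraph V} {B : Set V}
    (hB : IsBlock G B) (h2 : 1 < B.ncard) {x y : V} (hx : x ∈ B) (hy : y ∉ B)
    (hadj : G.Adj x y) (hxnc : ¬ IsCutVertex G x) : False := by
  obtain ⟨hcard2, hBconn, hBnc', hBmax⟩ := hB
  have hBnc : ∀ r (hr : r ∈ B), (G.induce (B \ {r})).Connected := fun r hr =>
    iso_connected (induceInduceIso G B ⟨r, hr⟩) (not_not.mp (hBnc' ⟨r, hr⟩))
  obtain ⟨z, hzB, hzx⟩ := Set.exists_ne_of_one_lt_ncard h2 x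
  have hyx : y ≠ x := fun h => hy (h ▸ hx)
  have hconn' : (G.induce ({x}ᶜ : Set V)).Connected := not_not.mp hxnc
  obtain ⟨p0⟩ := hconn' ⟨y, hyx⟩ ⟨z, hzx⟩
  obtain ⟨b₀, hb₀T, q₀, hq₀path, hq₀T⟩ :=
    first_hit {s : ({x}ᶜ : Set V) | (s : V) ∈ B} p0 hy hzB
  set b : V := (b₀ : V) with hbdef
  have hbB : b ∈ B := hb₀T
  set q' : G.Walk y b := q₀.map (inducedHom G ({x}ᶜ : Set V)) with hq'def
  have hq'path : q'.IsPath :=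
    Walk.map_isPath_of_injective Subtype.val_injective hq₀path
  have hsx : ∀ s ∈ q'.support, s ≠ x := by
    intro s hs
    obtain ⟨t, _, rfl⟩ := List.mem_map.mp
      (Eq.mp (congrArg (s ∈ ·) (Walk.support_map (inducedHom G ({x}ᶜ : Set V)) q₀)) hs)
    exact t.2
  have hsB : ∀ s ∈ q'.support, s ∈ B → s = b := by
    intro s hs hsB
    obtain ⟨t, htm, rfl⟩ := List.mem_map.mp
      (Eq.mp (congrArg (s ∈ ·) (Walk.support_map (inducedHom G ({x}ᶜ : Set V)) q₀)) hs)
    exact congrArg Subtype.val (hq₀T t htm hsB)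
  set C : Set V := B ∪ {s | s ∈ q'.support} with hCdef
  have hBC : B ⊆ C := Set.subset_union_left
  have hyS : y ∈ q'.support := q'.start_mem_support
  have hbS : b ∈ q'.support := q'.end_mem_support
  have hyC : y ∈ C := Or.inr hyS
  have hxb : x ≠ b := fun h => hsx b hbS h.symm
  have hxS : x ∉ q'.support := fun h => hsx x h rfl
  have hyb : y ≠ b := fun h => hy (h ▸ hbB)
  have hsubC : ∀ s ∈ q'.support, s ∈ C := fun s hs => Or.inr hs
  have hCconn : (G.induce C).Connected := by
    apply induce_connected_of_hub (hBC hbB)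
    intro a ha
    rcases ha with haB | haS
    · exact reachable_induce_mono hBC haB hbB (hBconn ⟨a, haB⟩ ⟨b, hbB⟩)
    · exact reachable_in_induce (q'.dropUntil a haS)
        (fun s hs => hsubC s (Walk.support_dropUntil_subset q' haS hs)) (Or.inr haS) (Or.inr hbS)
  have hnocut : ∀ r, r ∈ C → (G.induce (C \ {r})).Connected := by
    intro r hrC
    by_cases hrS : r ∈ q'.support
    · by_cases hrb : r = b
      · -- removing the endpoint b : hub x
        have hxr : x ≠ r := fun h => hxb (h.trans hrb)
        have hyr : y ≠ r := fun h => hyb (h.trans hrb)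
        have hxmem : x ∈ C \ {r} := mem_diff_singleton (hBC hx) hxr
        have hymem : y ∈ C \ {r} := mem_diff_singleton (Or.inr hyS) hyr
        apply induce_connected_of_hub hxmem
        rintro a ⟨haC, har⟩
        have hane : a ≠ r := har
        have habne : a ≠ b := fun h => hane (h.trans hrb.symm)
        rcases haC with haB | haS
        · have h1 := (hBnc b hbB) ⟨a, haB, habne⟩ ⟨x, hx, hxb⟩
          have hsub : B \ {b} ⊆ C \ {r} := fun s hs =>
            mem_diff_singleton (hBC hs.1) (fun h => hs.2 (h.trans hrb))
          exact reachable_induce_mono hsub ⟨haB, habne⟩ ⟨hx, hxb⟩ h1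
        · have harev : a ∈ q'.reverse.support := by
            rw [Walk.support_reverse]; exact List.mem_reverse.mpr haS
          have hbnot : b ∉ ((q'.reverse).dropUntil a harev).support :=
            not_mem_dropUntil_support_of_isPath q'.reverse hq'path.reverse harev habne
          have hsup : ∀ s ∈ ((q'.reverse).dropUntil a harev).support, s ∈ C \ {r} := by
            intro s hs
            have hs' := Walk.support_dropUntil_subset q'.reverse harev hs
            rw [Walk.support_reverse, List.mem_reverse] at hs'
            refine mem_diff_singleton (Or.inr hs') (fun heq => hbnot ?_)
            exact (heq.trans hrb) ▸ hs
          have h1 := reachable_in_induce ((q'.reverse).dropUntil a harev) hsup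
            (hsup a (Walk.start_mem_support _)) hymem
          have h2 : (G.induce (C \ {r})).Reachable ⟨y, hymem⟩ ⟨x, hxmem⟩ :=
            (induce_adj_of hymem hxmem hadj.symm).reachable
          exact h1.trans h2
      · by_cases hry : r = y
        · -- removing the start y : hub b
          have hbr : b ≠ r := fun h => hrb h.symm
          have hBsub : B ⊆ C \ {r} := fun s hs =>
            mem_diff_singleton (hBC hs) (fun h => hy (hry ▸ h ▸ hs))
          have hbmem : b ∈ C \ {r} := hBsub hbB
          apply induce_connected_of_hub hbmem
          rintro a ⟨haC, har⟩
          have hane : a ≠ r := har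
          rcases haC with haB | haS
          · exact reachable_induce_mono hBsub haB hbB (hBconn ⟨a, haB⟩ ⟨b, hbB⟩)
          · have hrnot : r ∉ (q'.dropUntil a haS).support := by
              rw [hry]
              exact not_mem_dropUntil_support_of_isPath q' hq'path haS (hry ▸ hane)
            have hsup : ∀ s ∈ (q'.dropUntil a haS).support, s ∈ C \ {r} := by
              intro s hs
              refine mem_diff_singleton (Or.inr (Walk.support_dropUntil_subset q' haS hs))
                (fun heq => hrnot (heq ▸ hs))
            exact reachable_in_induce (q'.dropUntil a haS) hsup
              (hsup a (Walk.start_mem_support _)) hbmem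
        · -- r strictly inside the path : hub b
          have hrB : r ∉ B := fun hrBB => hrb (hsB r hrS hrBB)
          have hBsub : B ⊆ C \ {r} := fun s hs =>
            mem_diff_singleton (hBC hs) (fun h => hrB (h ▸ hs))
          have hbmem : b ∈ C \ {r} := hBsub hbB
          have hymem : y ∈ C \ {r} := mem_diff_singleton (Or.inr hyS) (fun h => hry h.symm)
          have hxmem : x ∈ C \ {r} := hBsub hx
          apply induce_connected_of_hub hbmem
          rintro a ⟨haC, har⟩
          have hane : a ≠ r := har
          rcases haC with haB | haS
          · exact reachable_induce_mono hBsub haB hbB (hBconn ⟨a, haB⟩ ⟨b, hbB⟩)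
          · have hmem : a ∈ (q'.takeUntil r hrS).support ∨ a ∈ (q'.dropUntil r hrS).support := by
              rw [← Walk.mem_support_append_iff, q'.take_spec hrS]
              exact haS
            rcases hmem with htk | hdp
            · have htkpath : (q'.takeUntil r hrS).IsPath := hq'path.takeUntil hrS
              have harev : a ∈ (q'.takeUntil r hrS).reverse.support := by
                rw [Walk.support_reverse]; exact List.mem_reverse.mpr htk
              have hrnot : r ∉ ((q'.takeUntil r hrS).reverse.dropUntil a harev).support :=
                not_mem_dropUntil_support_of_isPath _ htkpath.reverse harev hane
              have hsup : ∀ s ∈ ((q'.takeUntil r hrS).reverse.dropUntil a harev).support,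
                  s ∈ C \ {r} := by
                intro s hs
                have hs' := Walk.support_dropUntil_subset _ harev hs
                rw [Walk.support_reverse, List.mem_reverse] at hs'
                have hs'' := Walk.support_takeUntil_subset q' hrS hs'
                exact mem_diff_singleton (Or.inr hs'') (fun heq => hrnot (heq ▸ hs))
              have h1 := reachable_in_induce ((q'.takeUntil r hrS).reverse.dropUntil a harev)
                hsup (hsup a (Walk.start_mem_support _)) hymem
              have h2 : (G.induce (C \ {r})).Reachable ⟨y, hymem⟩ ⟨x, hxmem⟩ :=
                (induce_adj_of hymem hxmem hadj.symm).reachable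
              have h3 := reachable_induce_mono hBsub hx hbB (hBconn ⟨x, hx⟩ ⟨b, hbB⟩)
              exact (h1.trans h2).trans h3
            · have hdppath : (q'.dropUntil r hrS).IsPath := hq'path.dropUntil hrS
              have hrnot : r ∉ ((q'.dropUntil r hrS).dropUntil a hdp).support :=
                not_mem_dropUntil_support_of_isPath _ hdppath hdp hane
              have hsup : ∀ s ∈ ((q'.dropUntil r hrS).dropUntil a hdp).support,
                  s ∈ C \ {r} := by
                intro s hs
                have hs' := Walk.support_dropUntil_subset _ hdp hs
                have hs'' := Walk.support_dropUntil_subset q' hrS hs'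
                exact mem_diff_singleton (Or.inr hs'') (fun heq => hrnot (heq ▸ hs))
              exact reachable_in_induce ((q'.dropUntil r hrS).dropUntil a hdp) hsup
                (hsup a (Walk.start_mem_support _)) hbmem
    · -- r not on the path, so r ∈ B : hub b
      have hrB : r ∈ B := by
        rcases hrC with h | h
        · exact h
        · exact absurd h hrS
      have hbr : b ≠ r := fun h => hrS (h ▸ hbS)
      have hSsub : ∀ s ∈ q'.support, s ∈ C \ {r} := fun s hs =>
        mem_diff_singleton (Or.inr hs) (fun heq => hrS (heq ▸ hs))
      have hbmem : b ∈ C \ {r} := hSsub b hbS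
      apply induce_connected_of_hub hbmem
      rintro a ⟨haC, har⟩
      have hane : a ≠ r := har
      rcases haC with haB | haS
      · have h1 := (hBnc r hrB) ⟨a, haB, hane⟩ ⟨b, hbB, hbr⟩
        exact reachable_induce_mono (Set.diff_subset_diff_left hBC) ⟨haB, hane⟩ ⟨hbB, hbr⟩ h1
      · exact reachable_in_induce (q'.dropUntil a haS)
          (fun s hs => hSsub s (Walk.support_dropUntil_subset q' haS hs))
          (hSsub a haS) hbmem
  have hCnc : ∀ v : C, ¬ IsCutVertex (G.induce C) v := fun v hcv =>
    hcv (iso_connected (induceInduceIso G C v).symm (hnocut v.1 v.2))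
  have hCB := hBmax C hBC hCconn hCnc
  exact hy (hCB ▸ hyC)

end Block

/-- Replacing a pendant block `B` (of size `m ≥ 4`, with cut vertex `w`) by the
cycle `C_m`, keeping `w` a cut vertex, does not decrease vertex distances:
every vertex of `G` is dominated by some vertex of `G'`, and vertices outside
`B ∖ {w}` are dominated by themselves. -/
theorem stmt6 (n k m : ℕ) (hn : 5 ≤ n) (hk : 1 ≤ k)
    (G G' : SimpleGraph (Fin n)) (hG : G.Connected)
    (hcut : cutVertexCount G = k)
    (B : Set (Fin n)) (hB : IsPendantBlock G B) (hm : B.ncard = m) (hm4 : 4 ≤ m)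
    (w : Fin n) (hw : w ∈ B) (hwcut : IsCutVertex G w)
    (houtside : ∀ u v : Fin n, (u ∉ B ∨ v ∉ B) → (G'.Adj u v ↔ G.Adj u v))
    (hinside : Nonempty ((G'.induce B) ≃g cycleG m))
    (hw' : IsCutVertex G' w) :
    (∀ v : Fin n, ∃ v' : Fin n, vertexDistance G v ≤ vertexDistance G' v') ∧
    (∀ v : Fin n, (v ∉ B ∨ v = w) →
      vertexDistance G v ≤ vertexDistance G' v) := by
    classical
  obtain ⟨e⟩ := hinside
  have hm3 : 3 ≤ m := by omega
  obtain ⟨hBblock, hBpend⟩ := hB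
  have hGBconn : (G.induce B).Connected := hBblock.2.1
  have honlyw : ∀ x, x ∈ B → x ≠ w → ¬ IsCutVertex G x := by
    intro x hxB hxw hxcut
    obtain ⟨a, ha⟩ := Set.ncard_eq_one.mp hBpend
    have hwmem : w ∈ {v ∈ B | IsCutVertex G v} := ⟨hw, hwcut⟩
    have hxmem : x ∈ {v ∈ B | IsCutVertex G v} := ⟨hxB, hxcut⟩
    rw [ha, Set.mem_singleton_iff] at hwmem hxmem
    exact hxw (hxmem.trans hwmem.symm)
  have h1B : 1 < B.ncard := by omega
  have bcB : ∀ a b : Fin n, G.Adj a b → a ∈ B → b ∉ B → a = w := by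
    intro a b hab haB hbB
    by_contra hne
    exact block_boundary_aux hBblock h1B haB hbB hab (honlyw a haB hne)
  have bcB' : ∀ a b : Fin n, G'.Adj a b → a ∈ B → b ∉ B → a = w := fun a b hab haB hbB =>
    bcB a b ((houtside a b (Or.inr hbB)).mp hab) haB hbB
  set S₁ : Set (Fin n) := Bᶜ ∪ {w} with hS₁def
  have hwS₁ : w ∈ S₁ := Or.inr rfl
  have hmem₁ : ∀ v : Fin n, (v ∉ B ∨ v = w) → v ∈ S₁ := fun v h => h.imp id id
  have hnotS₁ : ∀ v : Fin n, v ∉ S₁ → v ∈ B ∧ v ≠ w := by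
    intro v h
    constructor
    · by_contra h2; exact h (Or.inl h2)
    · intro h2; exact h (Or.inr h2)
  have hS₁mem : ∀ v : Fin n, v ∈ S₁ → v ∈ B → v = w := by
    intro v h hvB
    rcases h with h | h
    · exact absurd hvB h
    · exact h
  have bcS₁ : ∀ a b : Fin n, G.Adj a b → a ∈ S₁ → b ∉ S₁ → a = w := by
    intro a b hab haS hbS
    rcases haS with haB | haw
    · exact absurd (bcB b a hab.symm (hnotS₁ b hbS).1 haB) (hnotS₁ b hbS).2
    · exact haw
  have bcS₁' : ∀ a b : Fin n, G'.Adj a b → a ∈ S₁ → b ∉ S₁ → a = w := by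
    intro a b hab haS hbS
    rcases haS with haB | haw
    · exact absurd (bcB' b a hab.symm (hnotS₁ b hbS).1 haB) (hnotS₁ b hbS).2
    · exact haw
  have hS₁adj : ∀ (a b : ↥S₁), G.Adj a.val b.val ↔ G'.Adj a.val b.val := by
    intro a b
    by_cases haB : a.val ∈ B
    · have haw := hS₁mem _ a.2 haB
      by_cases hbB : b.val ∈ B
      · have hbw := hS₁mem _ b.2 hbB
        rw [haw, hbw]
        constructor <;> intro h <;> exact absurd rfl h.ne
      · exact (houtside _ _ (Or.inr hbB)).symm
    · exact (houtside _ _ (Or.inl haB)).symm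
  let homGS₁ : G.induce S₁ →g G' := ⟨Subtype.val, fun {a b} h => (hS₁adj a b).mp h⟩
  let homG'S₁ : G'.induce S₁ →g G := ⟨Subtype.val, fun {a b} h => (hS₁adj a b).mpr h⟩
  have hG'Bconn : (G'.induce B).Connected := iso_connected e.symm (cycle_connected hm3)
  have hG'conn : G'.Connected := by
    rw [connected_iff]
    have hreach : ∀ a : Fin n, G'.Reachable a w := by
      intro a
      by_cases haB : a ∈ B
      · exact (hG'Bconn ⟨a, haB⟩ ⟨w, hw⟩).map (inducedHom G' B)
      · obtain ⟨p⟩ := hG a w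
        obtain ⟨q, _⟩ := (shorten_walk hwS₁ bcS₁ p hwS₁).1 (Or.inl haB)
        exact ⟨q.map homGS₁⟩
    exact ⟨fun a b => (hreach a).trans (hreach b).symm, ⟨w⟩⟩
  have outLB : ∀ v u : Fin n, v ∈ S₁ → u ∈ S₁ → G.dist v u ≤ G'.dist v u := by
    intro v u hv hu
    obtain ⟨p, hp⟩ := (hG'conn v u).exists_walk_length_eq_dist
    obtain ⟨q, hq⟩ := (shorten_walk hwS₁ bcS₁' p hu).1 hv
    calc G.dist v u ≤ (q.map homG'S₁).length := dist_le _
      _ = q.length := Walk.length_map _ _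
      _ ≤ p.length := hq
      _ = G'.dist v u := hp
  have hBLB : ∀ (a b : Fin n) (ha : a ∈ B) (hb : b ∈ B),
      (G'.induce B).dist ⟨a, ha⟩ ⟨b, hb⟩ ≤ G'.dist a b := by
    intro a b ha hb
    obtain ⟨p, hp⟩ := (hG'conn a b).exists_walk_length_eq_dist
    obtain ⟨q, hq⟩ := (shorten_walk hw bcB' p hb).1 ha
    calc (G'.induce B).dist ⟨a, ha⟩ ⟨b, hb⟩ ≤ q.length := dist_le _
      _ ≤ p.length := hq
      _ = G'.dist a b := hp
  have crossLB : ∀ v u : Fin n, (v ∉ B ∨ v = w) → ∀ hu : u ∈ B,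
      G.dist v w + (G'.induce B).dist ⟨w, hw⟩ ⟨u, hu⟩ ≤ G'.dist v u := by
    intro v u hv hu
    rcases hv with hvB | rfl
    · obtain ⟨p, hp⟩ := (hG'conn v u).exists_walk_length_eq_dist
      obtain ⟨q, r, hqr⟩ := cross_walk hw bcB' p hvB hu
      have h1 : G.dist v w ≤ q.length := by
        obtain ⟨q', hq'⟩ := (shorten_walk hwS₁ bcS₁' q hwS₁).1 (Or.inl hvB)
        calc G.dist v w ≤ (q'.map homG'S₁).length := dist_le _
          _ = q'.length := Walk.length_map _ _
          _ ≤ q.length := hq'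
      have h2 : (G'.induce B).dist ⟨w, hw⟩ ⟨u, hu⟩ ≤ r.length := dist_le r
      omega
    · rw [SimpleGraph.dist_self]
      simpa using hBLB v u hw hu
  have crossUB : ∀ v u : Fin n, ∀ hu : u ∈ B,
      G.dist v u ≤ G.dist v w + (G.induce B).dist ⟨w, hw⟩ ⟨u, hu⟩ := by
    intro v u hu
    calc G.dist v u ≤ G.dist v w + G.dist w u := hG.dist_triangle
      _ ≤ _ := Nat.add_le_add_left (dist_le_induce hw hu (hGBconn _ _)) _
  have cardB : Fintype.card ↥B = m := by
    rw [← Nat.card_eq_fintype_card, Nat.card_coe_set_eq, hm]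
  have hfsplit : ∀ f : Fin n → ℕ,
      ∑ u : Fin n, f u
        = (∑ u : ↥B, f u) + ∑ u ∈ Finset.univ.filter (fun u => u ∉ B), f u := by
    intro f
    rw [← Finset.sum_filter_add_sum_filter_not Finset.univ (fun u => u ∈ B) f]
    congr 1
    exact Finset.sum_subtype _ (by simp) f
  have hGBnc : ∀ v : ↥B, ((G.induce B).induce ({v}ᶜ : Set ↥B)).Connected :=
    fun v => not_not.mp (hBblock.2.2.1 v)
  have hlev := fun (v : ↥B) => level_bound hGBconn hGBnc v
  have hGBsum : ∀ v : ↥B, ∑ u : ↥B, (G.induce B).dist v u ≤ m^2/4 := by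
    intro v
    have h4 := (hlev v).2
    rw [cardB] at h4
    omega
  have hGBecc : ∀ v u : ↥B, (G.induce B).dist v u ≤ m/2 := by
    intro v u
    have h2 := (hlev v).1 u
    rw [cardB] at h2
    omega
  have hcycsum : ∀ a : ↥B, m^2/4 ≤ ∑ u : ↥B, (G'.induce B).dist a u := by
    intro a
    calc m^2/4 ≤ ∑ x : Fin m, (cycleG m).dist (e a) x := cycle_sum_lb hm3 (e a)
      _ = ∑ u : ↥B, (cycleG m).dist (e a) (e u) := (Equiv.sum_comp e.toEquiv _).symm
      _ = ∑ u : ↥B, (G'.induce B).dist a u :=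
          Finset.sum_congr rfl (fun u _ => iso_dist e a u)
  obtain ⟨bz, hbz⟩ := cycle_ecc hm3 (e ⟨w, hw⟩)
  set v'B : ↥B := e.symm bz with hv'def
  have hwv' : m/2 ≤ (G'.induce B).dist ⟨w, hw⟩ v'B := by
    calc m/2 ≤ (cycleG m).dist (e ⟨w, hw⟩) bz := hbz
      _ = (cycleG m).dist (e ⟨w, hw⟩) (e v'B) := by rw [hv'def, e.apply_symm_apply]
      _ = (G'.induce B).dist ⟨w, hw⟩ v'B := iso_dist e _ _
  have parttwo : ∀ v : Fin n, (v ∉ B ∨ v = w) → vertexDistance G v ≤ vertexDistance G' v := by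
    intro v hv
    rw [vertexDistance, vertexDistance, hfsplit (fun u => G.dist v u),
      hfsplit (fun u => G'.dist v u)]
    have hBpart : (∑ u : ↥B, G.dist v u) ≤ ∑ u : ↥B, G'.dist v u := by
      calc ∑ u : ↥B, G.dist v u
          ≤ ∑ u : ↥B, (G.dist v w + (G.induce B).dist ⟨w, hw⟩ u) :=
            Finset.sum_le_sum (fun u _ => crossUB v u u.2)
        _ = (Fintype.card ↥B) * G.dist v w + ∑ u : ↥B, (G.induce B).dist ⟨w, hw⟩ u := by
            rw [Finset.sum_add_distrib, Finset.sum_const, Finset.card_univ, smul_eq_mul]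
        _ ≤ m * G.dist v w + m^2/4 := by
            rw [cardB]; exact Nat.add_le_add_left (hGBsum _) _
        _ ≤ (Fintype.card ↥B) * G.dist v w + ∑ u : ↥B, (G'.induce B).dist ⟨w, hw⟩ u := by
            rw [cardB]; exact Nat.add_le_add_left (hcycsum _) _
        _ = ∑ u : ↥B, (G.dist v w + (G'.induce B).dist ⟨w, hw⟩ u) := by
            rw [Finset.sum_add_distrib, Finset.sum_const, Finset.card_univ, smul_eq_mul]
        _ ≤ ∑ u : ↥B, G'.dist v u :=
            Finset.sum_le_sum (fun u _ => crossLB v u hv u.2)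
    have hOpart : ∑ u ∈ Finset.univ.filter (fun u => u ∉ B), G.dist v u
        ≤ ∑ u ∈ Finset.univ.filter (fun u => u ∉ B), G'.dist v u :=
      Finset.sum_le_sum (fun u hu => outLB v u (hmem₁ v hv)
        (Or.inl (Finset.mem_filter.mp hu).2))
    exact Nat.add_le_add hBpart hOpart
  refine ⟨?_, parttwo⟩
  intro v
  by_cases hv : v ∉ B ∨ v = w
  · exact ⟨v, parttwo v hv⟩
  · push_neg at hv
    obtain ⟨hvB, hvw⟩ := hv
    refine ⟨(v'B : Fin n), ?_⟩
    rw [vertexDistance, vertexDistance, hfsplit (fun u => G.dist v u),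
      hfsplit (fun u => G'.dist (v'B : Fin n) u)]
    have hBpart : ∑ u : ↥B, G.dist v u ≤ ∑ u : ↥B, G'.dist (v'B : Fin n) u := by
      calc ∑ u : ↥B, G.dist v u
          ≤ ∑ u : ↥B, (G.induce B).dist ⟨v, hvB⟩ u :=
            Finset.sum_le_sum (fun u _ => dist_le_induce hvB u.2 (hGBconn _ _))
        _ ≤ m^2/4 := hGBsum _
        _ ≤ ∑ u : ↥B, (G'.induce B).dist v'B u := hcycsum v'B
        _ ≤ ∑ u : ↥B, G'.dist (v'B : Fin n) u :=
            Finset.sum_le_sum (fun u _ => hBLB _ _ v'B.2 u.2)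
    have hOpart : ∑ u ∈ Finset.univ.filter (fun u => u ∉ B), G.dist v u
        ≤ ∑ u ∈ Finset.univ.filter (fun u => u ∉ B), G'.dist (v'B : Fin n) u := by
      apply Finset.sum_le_sum
      intro u hu
      have huB : u ∉ B := (Finset.mem_filter.mp hu).2
      have hG1 : G.dist v u ≤ m/2 + G.dist w u := by
        calc G.dist v u ≤ G.dist v w + G.dist w u := hG.dist_triangle
          _ ≤ m/2 + G.dist w u := Nat.add_le_add_right
              (le_trans (dist_le_induce hvB hw (hGBconn _ _)) (hGBecc ⟨v, hvB⟩ ⟨w, hw⟩)) _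
      have hG2 : m/2 + G.dist w u ≤ G'.dist (v'B : Fin n) u := by
        have h1 := crossLB u (v'B : Fin n) (Or.inl huB) v'B.2
        calc m/2 + G.dist w u = G.dist u w + (m/2) := by
              rw [SimpleGraph.dist_comm]; omega
          _ ≤ G.dist u w + (G'.induce B).dist ⟨w, hw⟩ v'B := Nat.add_le_add_left hwv' _
          _ ≤ G'.dist u (v'B : Fin n) := h1
          _ = G'.dist (v'B : Fin n) u := SimpleGraph.dist_comm
      exact le_trans hG1 hG2
    exact Nat.add_le_add hBpart hOpart
end

section
/- Let 1 ≤ k ≤ n − 3, let z be the pendant vertex of L_{n,n−k}, and let G be any connected graph on n vertices with exactly k cut vertices. Then for every vertex v of G, D_G(v) ≤ D_{L_{n,n−k}}(z). -/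
open SimpleGraph

variable {V : Type*}

section AuxProof

open Finset

variable {W : Type*} {G : SimpleGraph W}

private lemma aux_dist_getVert_le (hG : G.Connected) {a b : W} (p : G.Walk a b) (i : ℕ) :
    G.dist a (p.getVert i) ≤ i := by
  induction p generalizing i with
  | nil => simp [SimpleGraph.Walk.getVert, SimpleGraph.dist_self]
  | @cons a c b h q ih =>
    match i with
    | 0 => simp
    | (i+1) =>
      rw [SimpleGraph.Walk.getVert_cons_succ]
      have h3 : G.dist a (q.getVert i) ≤ G.dist a c + G.dist c (q.getVert i) :=
        hG.dist_triangle
      have h1 : G.dist a c ≤ 1 := SimpleGraph.dist_le h.toWalk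
      have h2 := ih i
      omega

private lemma aux_dist_getVert_right_le {a b : W} (p : G.Walk a b) (i : ℕ) :
    G.dist (p.getVert i) b ≤ p.length - i := by
  induction p generalizing i with
  | nil => simp [SimpleGraph.Walk.getVert, SimpleGraph.dist_self]
  | cons h q ih =>
    match i with
    | 0 => simpa using SimpleGraph.dist_le (SimpleGraph.Walk.cons h q)
    | (i+1) =>
      rw [SimpleGraph.Walk.getVert_cons_succ]
      simpa using ih i

private lemma aux_exists_dist_eq (hG : G.Connected) (v u : W) {i : ℕ} (hi : i ≤ G.dist v u) :
    ∃ w, G.dist v w = i := by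
  obtain ⟨p, hp⟩ := hG.exists_walk_length_eq_dist v u
  refine ⟨p.getVert i, ?_⟩
  have h1 := aux_dist_getVert_le hG p i
  have h2 := aux_dist_getVert_right_le p i
  have h3 : G.dist v u ≤ G.dist v (p.getVert i) + G.dist (p.getVert i) u := hG.dist_triangle
  omega

private lemma aux_dist_adj_le (hG : G.Connected) {a b : W} (v : W) (hab : G.Adj a b) :
    G.dist v b ≤ G.dist v a + 1 := by
  have h1 : G.dist a b ≤ 1 := SimpleGraph.dist_le hab.toWalk
  have := hG.dist_triangle (u := v) (v := a) (w := b)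
  omega

private lemma aux_dist_lt_card [Fintype W] [DecidableEq W] (hG : G.Connected) (v u : W) :
    G.dist v u < Fintype.card W := by
  obtain ⟨p, hp⟩ := hG.exists_walk_length_eq_dist v u
  calc G.dist v u ≤ p.bypass.length := SimpleGraph.dist_le _
    _ < Fintype.card W := p.bypass_isPath.length_lt

private lemma aux_walk_no_cross (hG : G.Connected) (v w : W) {i : ℕ}
    (huniq : ∀ x, G.dist v x = i → x = w) :
    ∀ (a b : ({w}ᶜ : Set W)) (_ : (G.induce ({w}ᶜ : Set W)).Walk a b),
      G.dist v (a : W) < i → G.dist v (b : W) < i := by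
  intro a b p
  induction p with
  | nil => exact id
  | @cons a c b h q ih =>
    intro ha
    apply ih
    have hadj : G.Adj (a : W) (c : W) := h
    have h1 := aux_dist_adj_le hG v hadj
    have h2 : G.dist v (c : W) ≠ i := fun hc => c.2 (huniq _ hc)
    omega

private lemma aux_isCutVertex_of_unique_level (hG : G.Connected) (v w : W) {i : ℕ} (hi : 1 ≤ i)
    (hw : G.dist v w = i) (huniq : ∀ x, G.dist v x = i → x = w)
    (u : W) (hu : i < G.dist v u) : IsCutVertex G w := by
  intro hcon
  have hdv : G.dist v v = 0 := SimpleGraph.dist_self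
  have hv : (v : W) ∈ ({w}ᶜ : Set W) := by
    simp only [Set.mem_compl_iff, Set.mem_singleton_iff]
    intro hvw; subst hvw; omega
  have hu' : (u : W) ∈ ({w}ᶜ : Set W) := by
    simp only [Set.mem_compl_iff, Set.mem_singleton_iff]
    intro huw; subst huw; omega
  obtain ⟨p⟩ := hcon.preconnected ⟨v, hv⟩ ⟨u, hu'⟩
  have h2 : G.dist v u < i :=
    aux_walk_no_cross hG v w huniq ⟨v, hv⟩ ⟨u, hu'⟩ p (by simpa [hdv] using Nat.lt_of_lt_of_le Nat.zero_lt_one hi)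
  omega

private lemma aux_count_level_bound {n k : ℕ} {G : SimpleGraph (Fin n)} (hG : G.Connected)
    (hcut : {v : Fin n | IsCutVertex G v}.ncard = k) (v : Fin n) (t : ℕ) :
    (Finset.univ.filter fun u => t < G.dist v u).card ≤
      if t < k then n - 1 - t else n + k - 1 - 2 * t := by
  classical
  set C := Finset.univ.filter (fun u => t < G.dist v u) with hC
  rcases Finset.eq_empty_or_nonempty C with h | ⟨u0, hu0⟩
  · simp [h]
  · have hu0' : t < G.dist v u0 := by
      have := hu0; rw [hC, Finset.mem_filter] at this; exact this.2
    set L : ℕ → Finset (Fin n) := fun i => Finset.univ.filter (fun w => G.dist v w = i) with hL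
    have hLne : ∀ i, i ≤ t → (L i).Nonempty := by
      intro i hi
      obtain ⟨w, hw⟩ := aux_exists_dist_eq hG v u0 (le_of_lt (lt_of_le_of_lt hi hu0'))
      exact ⟨w, by simp [hL, hw]⟩
    set S := (Finset.Icc 1 t).filter (fun i => (L i).card = 1) with hS
    set φ : ℕ → Fin n := fun i => if h : (L i).Nonempty then h.choose else v with hφ
    have hφmem : ∀ i, (L i).Nonempty → φ i ∈ L i := by
      intro i hne
      rw [hφ]; simp only [dif_pos hne]; exact hne.choose_spec
    have hφdist : ∀ i ∈ S, G.dist v (φ i) = i := by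
      intro i hi
      rw [hS, Finset.mem_filter] at hi
      have hne : (L i).Nonempty := Finset.card_pos.mp (by omega)
      have := hφmem i hne
      rw [hL] at this; simpa using this
    have hφcut : ∀ i ∈ S, IsCutVertex G (φ i) := by
      intro i hi
      have hid := hφdist i hi
      rw [hS, Finset.mem_filter, Finset.mem_Icc] at hi
      obtain ⟨⟨hi1, hi2⟩, hcard1⟩ := hi
      obtain ⟨a, ha⟩ := Finset.card_eq_one.mp hcard1
      have huniq : ∀ x, G.dist v x = i → x = φ i := by
        intro x hx
        have hxL : x ∈ L i := by simp [hL, hx]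
        have hφL : φ i ∈ L i := by simp [hL, hid]
        rw [ha, Finset.mem_singleton] at hxL hφL
        rw [hxL, hφL]
      exact aux_isCutVertex_of_unique_level hG v (φ i) hi1 hid huniq u0
        (lt_of_le_of_lt hi2 hu0')
    have hSk : S.card ≤ k := by
      rw [← hcut, ← Set.ncard_coe_finset S]
      apply Set.ncard_le_ncard_of_injOn φ
      · intro i hi
        exact hφcut i (by simpa using hi)
      · intro i hi j hj hij
        have h1 := hφdist i (by simpa using hi)
        have h2 := hφdist j (by simpa using hj)
        rw [hij] at h1; omega
    have hst : S.card ≤ t := by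
      have := Finset.card_le_card
        (Finset.filter_subset (fun i => (L i).card = 1) (Finset.Icc 1 t))
      simpa using this
    set F := Finset.univ.filter (fun w => 1 ≤ G.dist v w ∧ G.dist v w ≤ t) with hF
    have hFcard : F.card = ∑ i ∈ Finset.Icc 1 t, (L i).card := by
      rw [Finset.card_eq_sum_card_fiberwise (f := fun w => G.dist v w) (t := Finset.Icc 1 t)
        (by intro x hx; simp only [Finset.mem_coe, hF, Finset.mem_filter, Finset.mem_univ, true_and] at hx; simp only [Finset.mem_coe, Finset.mem_Icc]; exact hx)]
      apply Finset.sum_congr rfl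
      intro i hi
      rw [Finset.mem_Icc] at hi
      congr 1
      ext w
      rw [hF, hL]
      simp only [Finset.mem_filter, Finset.mem_univ, true_and]
      constructor
      · rintro ⟨_, h⟩; exact h
      · intro h; omega
    have hsum2 : ∑ i ∈ Finset.Icc 1 t, (L i).card + S.card ≥ 2 * t := by
      have hlow : ∀ i ∈ Finset.Icc 1 t, (if (L i).card = 1 then 1 else 2) ≤ (L i).card := by
        intro i hi
        rw [Finset.mem_Icc] at hi
        have := hLne i hi.2
        have hpos : 1 ≤ (L i).card := Finset.card_pos.mpr this
        split_ifs with h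
        · omega
        · omega
      have h1 : ∑ i ∈ Finset.Icc 1 t, (if (L i).card = 1 then 1 else 2) ≤
          ∑ i ∈ Finset.Icc 1 t, (L i).card := Finset.sum_le_sum hlow
      have h2 : ∑ i ∈ Finset.Icc 1 t, (if (L i).card = 1 then 1 else 2)
          = S.card * 1 + ((Finset.Icc 1 t).card - S.card) * 2 := by
        rw [Finset.sum_ite, Finset.sum_const, Finset.sum_const, ← hS]
        have := Finset.card_filter_add_card_filter_not
          (s := Finset.Icc 1 t) (p := fun i => (L i).card = 1)
        rw [← hS] at this
        simp only [smul_eq_mul]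
        omega
      have h3 : (Finset.Icc 1 t).card = t := by simp
      omega
    have hvF : v ∉ F := by simp [hF, SimpleGraph.dist_self]
    have hvC : v ∉ C := by simp [hC, SimpleGraph.dist_self]
    have hdisj : Disjoint F C := by
      rw [Finset.disjoint_left]
      intro w hwF hwC
      rw [hF, Finset.mem_filter] at hwF
      rw [hC, Finset.mem_filter] at hwC
      omega
    have hcard : F.card + C.card + 1 ≤ n := by
      have h1 : (insert v (F ∪ C)).card ≤ n := by
        have := Finset.card_le_univ (insert v (F ∪ C))
        simpa using this
      rw [Finset.card_insert_of_notMem (by simp [hvF, hvC]),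
        Finset.card_union_of_disjoint hdisj] at h1
      omega
    split_ifs with hk <;> omega

private lemma aux_threshold_sum {U : Type*} [Fintype U] (N : ℕ) (d : U → ℕ)
    (hd : ∀ u, d u ≤ N) :
    ∑ u : U, d u = ∑ t ∈ Finset.range N, (Finset.univ.filter fun u => t < d u).card := by
  classical
  have h1 : ∀ u : U, d u = ∑ t ∈ Finset.range N, (if t < d u then 1 else 0) := by
    intro u
    rw [← Finset.card_filter]
    rw [show (Finset.range N).filter (fun t => t < d u) = Finset.range (d u) by
      ext x; simp only [Finset.mem_filter, Finset.mem_range]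
      constructor
      · rintro ⟨_, h⟩; exact h
      · intro h; exact ⟨lt_of_lt_of_le h (hd u), h⟩]
    rw [Finset.card_range]
  calc ∑ u : U, d u = ∑ u : U, ∑ t ∈ Finset.range N, (if t < d u then 1 else 0) := by
        apply Finset.sum_congr rfl; intro u _; exact h1 u
    _ = ∑ t ∈ Finset.range N, ∑ u : U, (if t < d u then 1 else 0) := Finset.sum_comm
    _ = ∑ t ∈ Finset.range N, (Finset.univ.filter fun u => t < d u).card := by
        apply Finset.sum_congr rfl; intro t _
        rw [Finset.card_filter]

private lemma aux_card_fin_ico (n a b : ℕ) (hb : b ≤ n) :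
    (Finset.univ.filter fun j : Fin n => a ≤ (j : ℕ) ∧ (j : ℕ) < b).card = b - a := by
  rw [← Nat.card_Ico a b]
  refine Finset.card_bij (fun j _ => (j : ℕ)) ?_ ?_ ?_
  · intro j hj
    simp only [Finset.mem_filter] at hj
    rw [Finset.mem_Ico]; exact hj.2
  · intro j _ j' _ h
    exact Fin.ext h
  · intro m hm
    rw [Finset.mem_Ico] at hm
    refine ⟨⟨m, by omega⟩, ?_, rfl⟩
    simp only [Finset.mem_filter, Finset.mem_univ, true_and]
    exact hm

/-- Potential function: the distance from the pendant vertex `n-1` in `L_{n,n-k}`. -/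
private def pot (n k j : ℕ) : ℕ :=
  if n - k - 1 ≤ j then n - 1 - j else k + min (j + 1) (n - k - 1 - j)

private lemma aux_pot_le (n k j : ℕ) : pot n k j ≤ n := by
  rw [pot]; split_ifs <;> omega

private lemma aux_pot_last (n k : ℕ) (h : 1 ≤ k) : pot n k (n - 1) = 0 := by
  rw [pot]; split_ifs <;> omega

private lemma aux_pot_step {n k : ℕ} (hkn : k + 3 ≤ n) {a b : Fin n}
    (hab : (lollipop n (n - k)).Adj a b) : pot n k b ≤ pot n k a + 1 := by
  rw [lollipop, SimpleGraph.fromRel_adj] at hab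
  obtain ⟨hne, h | h⟩ := hab <;>
  · have ha := a.isLt
    have hb := b.isLt
    have hne' : (a : ℕ) ≠ (b : ℕ) := fun h => hne (Fin.ext h)
    rw [pot, pot]
    split_ifs <;> omega

private lemma aux_pot_walk {n k : ℕ} (hkn : k + 3 ≤ n) {a b : Fin n}
    (p : (lollipop n (n - k)).Walk a b) : pot n k b ≤ pot n k a + p.length := by
  induction p with
  | nil => simp
  | cons h q ih =>
    have := aux_pot_step hkn h
    simp only [SimpleGraph.Walk.length_cons]
    omega

private lemma aux_lollipop_adj_succ (n g j : ℕ) (h : j + 1 < n) :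
    (lollipop n g).Adj ⟨j, by omega⟩ ⟨j + 1, h⟩ := by
  rw [lollipop, SimpleGraph.fromRel_adj]
  exact ⟨by simp [Fin.ext_iff], Or.inl (Or.inl rfl)⟩

private lemma aux_lollipop_reach {n g : ℕ} (hn : 1 ≤ n) (j : Fin n) :
    (lollipop n g).Reachable ⟨n - 1, by omega⟩ j := by
  suffices h : ∀ m (j : Fin n), (j : ℕ) + m = n - 1 →
      (lollipop n g).Reachable j ⟨n - 1, by omega⟩ by
    exact (h (n - 1 - (j : ℕ)) j (by have := j.isLt; omega)).symm
  intro m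
  induction m with
  | zero =>
    intro j hj
    have : j = ⟨n - 1, by omega⟩ := Fin.ext (by simp only [Fin.val_mk]; omega)
    rw [this]
  | succ m ih =>
    intro j hj
    have hlt : (j : ℕ) + 1 < n := by omega
    have hadj : (lollipop n g).Adj j ⟨(j : ℕ) + 1, hlt⟩ :=
      aux_lollipop_adj_succ n g (j : ℕ) hlt
    exact hadj.reachable.trans (ih ⟨(j : ℕ) + 1, hlt⟩ (by simp; omega))

private lemma aux_pot_le_dist {n k : ℕ} (hk : 1 ≤ k) (hkn : k + 3 ≤ n) (u : Fin n) :
    pot n k (u : ℕ) ≤ (lollipop n (n - k)).dist ⟨n - 1, by omega⟩ u := by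
  obtain ⟨p, hp⟩ := (aux_lollipop_reach (by omega) u).exists_walk_length_eq_dist
  have := aux_pot_walk hkn p
  rw [hp] at this
  have h0 : pot n k ((⟨n - 1, by omega⟩ : Fin n) : ℕ) = 0 := aux_pot_last n k hk
  simp only [h0] at this
  omega

private lemma aux_count_pot_ge {n k : ℕ} (hk : 1 ≤ k) (hkn : k + 3 ≤ n) (t : ℕ) :
    (if t < k then n - 1 - t else n + k - 1 - 2 * t) ≤
      (Finset.univ.filter fun u : Fin n => t < pot n k (u : ℕ)).card := by
  by_cases ht : t < k
  · rw [if_pos ht]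
    have hsub : (Finset.univ.filter fun j : Fin n => 0 ≤ (j : ℕ) ∧ (j : ℕ) < n - 1 - t) ⊆
        Finset.univ.filter fun u : Fin n => t < pot n k (u : ℕ) := by
      intro j hj
      simp only [Finset.mem_filter, Finset.mem_univ, true_and] at hj ⊢
      obtain ⟨-, hj2⟩ := hj
      rw [pot]; split_ifs <;> omega
    calc n - 1 - t = _ := (aux_card_fin_ico n 0 (n - 1 - t) (by omega)).symm
      _ ≤ _ := Finset.card_le_card hsub
  · rw [if_neg ht]
    have hsub : (Finset.univ.filter fun j : Fin n =>
          t - k ≤ (j : ℕ) ∧ (j : ℕ) < n - k - 1 - (t - k)) ⊆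
        Finset.univ.filter fun u : Fin n => t < pot n k (u : ℕ) := by
      intro j hj
      simp only [Finset.mem_filter, Finset.mem_univ, true_and] at hj ⊢
      obtain ⟨hj1, hj2⟩ := hj
      rw [pot]; split_ifs <;> omega
    calc n + k - 1 - 2 * t ≤ n - k - 1 - (t - k) - (t - k) := by omega
      _ = _ := (aux_card_fin_ico n (t - k) (n - k - 1 - (t - k)) (by omega)).symm
      _ ≤ _ := Finset.card_le_card hsub

end AuxProof

/-- For every connected graph `G` on `n` vertices with exactly `k` cut vertices
(`1 ≤ k ≤ n-3`) and every vertex `v` of `G`, the distance of `v` is at most the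
distance of the pendant vertex of `L_{n,n-k}`. -/
theorem stmt11 (n k : ℕ) (hk : 1 ≤ k) (hkn : k ≤ n - 3)
    (G : SimpleGraph (Fin n)) (hG : G.Connected) (hcut : cutVertexCount G = k)
    (v : Fin n) :
    vertexDistance G v ≤
      vertexDistance (lollipop n (n - k)) ⟨n - 1, by omega⟩ := by
  classical
  have hkn' : k + 3 ≤ n := by omega
  rw [vertexDistance, vertexDistance]
  have hd : ∀ u, G.dist v u ≤ n := by
    intro u
    have := aux_dist_lt_card hG v u
    simpa using le_of_lt this
  rw [aux_threshold_sum n (fun u => G.dist v u) hd]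
  calc ∑ t ∈ Finset.range n, (Finset.univ.filter fun u => t < G.dist v u).card
      ≤ ∑ t ∈ Finset.range n, (if t < k then n - 1 - t else n + k - 1 - 2 * t) := by
        apply Finset.sum_le_sum
        intro t _
        exact aux_count_level_bound hG hcut v t
    _ ≤ ∑ t ∈ Finset.range n,
          (Finset.univ.filter fun u : Fin n => t < pot n k (u : ℕ)).card := by
        apply Finset.sum_le_sum
        intro t _
        exact aux_count_pot_ge hk hkn' t
    _ = ∑ u : Fin n, pot n k (u : ℕ) :=
        (aux_threshold_sum n (fun u : Fin n => pot n k (u : ℕ))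
          (fun u => aux_pot_le n k (u : ℕ))).symm
    _ ≤ ∑ u : Fin n, (lollipop n (n - k)).dist ⟨n - 1, by omega⟩ u := by
        apply Finset.sum_le_sum
        intro u _
        exact aux_pot_le_dist hk hkn' u
end
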